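/- arXiv:2004.02552 — 12 statements merged into one kernel-verified Lean document; each statement's English description precedes it below -/
import Mathlib

section
/- Let n ≥ 2 and consider indices in {1,…,n} circularly (i.e., index arithmetic modulo n). Suppose nonnegative functions η_{i,j}, σ_{i,j} : [0,∞)^n → [0,∞) for neighboring pairs j ∈ {i−1, i+1} and positive constants ℓ_{i,j} > 0 satisfy σ_{i,j}(x) ≤ ℓ_{i,j} η_{i,j}(x) for all x ∈ [0,∞)^n. Assume the small-gain conditions: (i) ℓ_{i,i+1} ℓ_{i+1,i} ≤ 1 for all i, and (ii) there exists k such that ℓ_{k,k+1} ℓ_{k+1,k} ≤ ∏_{i=1}^{n} (ℓ_{i,i+1}/ℓ_{i+1,i}) ≤ 1/(ℓ_{k,k+1} ℓ_{k+1,k}). Define weights λ_i = ∏_{j=k+2}^{i} √(ℓ_{j−1,j}/ℓ_{j,j−1}) for i ∈ {k+1, …, k+n} (so λ_{k+1} = 1, empty product). Then for all x ∈ [0,∞)^n and all i: λ_{i+1} σ_{i+1,i}(x) ≤ λ_i η_{i+1,i}(x) and λ_i σ_{i,i+1}(x) ≤ λ_{i+1} η_{i,i+1}(x). -/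
open Fin.NatCast

/-- Product of square roots equals square root of the product. -/
lemma sqrt_prod_aux (s : Finset ℕ) (g : ℕ → ℝ) (h : ∀ t ∈ s, 0 ≤ g t) :
    ∏ t ∈ s, Real.sqrt (g t) = Real.sqrt (∏ t ∈ s, g t) := by
  induction s using Finset.induction with
  | empty => simp
  | @insert a s ha ih =>
    rw [Finset.prod_insert ha, Finset.prod_insert ha,
      ih (fun t ht => h t (Finset.mem_insert_of_mem ht)),
      ← Real.sqrt_mul (h a (Finset.mem_insert_self a s))]

/-- Small-gain weight construction for a circular balancing network.
Indices live in `Fin n` with circular (mod n) arithmetic. Under the componentwise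
bounds σ_{i,j} ≤ ℓ_{i,j} η_{i,j} on the nonnegative orthant and the cyclic small-gain
conditions, the weights λ_i = ∏_{j=k+2}^{i} √(ℓ_{j-1,j}/ℓ_{j,j-1}) satisfy the pairwise
balancing inequalities. -/
theorem smallgain_weight_inequalities
    (n : ℕ) [NeZero n] (hn : 2 ≤ n)
    (η σ : Fin n → Fin n → (Fin n → ℝ) → ℝ)
    (hησ_nonneg : ∀ i j : Fin n, (j = i - 1 ∨ j = i + 1) →
      ∀ x : Fin n → ℝ, (∀ l, 0 ≤ x l) → 0 ≤ η i j x ∧ 0 ≤ σ i j x)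
    (ℓ : Fin n → Fin n → ℝ)
    (hℓ_pos : ∀ i j : Fin n, (j = i - 1 ∨ j = i + 1) → 0 < ℓ i j)
    (hbound : ∀ i j : Fin n, (j = i - 1 ∨ j = i + 1) →
      ∀ x : Fin n → ℝ, (∀ l, 0 ≤ x l) → σ i j x ≤ ℓ i j * η i j x)
    (hsg_cycle1 : ∀ i : Fin n, ℓ i (i + 1) * ℓ (i + 1) i ≤ 1)
    (k : Fin n)
    (hsg_cyclen_lo : ℓ k (k + 1) * ℓ (k + 1) k ≤ ∏ i : Fin n, ℓ i (i + 1) / ℓ (i + 1) i)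
    (hsg_cyclen_hi : ∏ i : Fin n, ℓ i (i + 1) / ℓ (i + 1) i ≤
      1 / (ℓ k (k + 1) * ℓ (k + 1) k))
    (lam : Fin n → ℝ)
    (hlam : ∀ m : ℕ, m < n →
      lam (k + 1 + (m : Fin n)) =
        ∏ t ∈ Finset.range m,
          Real.sqrt (ℓ (k + 1 + (t : Fin n)) (k + 1 + (t : Fin n) + 1) /
            ℓ (k + 1 + (t : Fin n) + 1) (k + 1 + (t : Fin n)))) :
    ∀ x : Fin n → ℝ, (∀ l, 0 ≤ x l) → ∀ i : Fin n,
      lam (i + 1) * σ (i + 1) i x ≤ lam i * η (i + 1) i x ∧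
      lam i * σ i (i + 1) x ≤ lam (i + 1) * η i (i + 1) x := by
  have hnpos : 0 < n := NeZero.pos n
  -- lam is nonnegative everywhere
  have lam_nonneg : ∀ j : Fin n, 0 ≤ lam j := by
    intro j
    have h1 : k + 1 + (((j - (k + 1)).val : ℕ) : Fin n) = j := by
      rw [Fin.cast_val_eq_self]; open Fin.CommRing in ring
    have h2 := hlam (j - (k + 1)).val (j - (k + 1)).isLt
    rw [h1] at h2
    rw [h2]
    exact Finset.prod_nonneg fun t _ => Real.sqrt_nonneg _
  intro x hx i
  set a := ℓ i (i + 1) with ha_def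
  set b := ℓ (i + 1) i with hb_def
  have ha : 0 < a := hℓ_pos i (i + 1) (Or.inr rfl)
  have hb : 0 < b := hℓ_pos (i + 1) i (Or.inl (by open Fin.CommRing in ring))
  have hab : a * b ≤ 1 := hsg_cycle1 i
  -- the key weight inequalities
  have key : lam (i + 1) * b ≤ lam i ∧ lam i * a ≤ lam (i + 1) := by
    set m := (i - (k + 1)).val with hm_def
    have hmlt : m < n := (i - (k + 1)).isLt
    have hi_eq : k + 1 + ((m : ℕ) : Fin n) = i := by
      rw [hm_def, Fin.cast_val_eq_self]; open Fin.CommRing in ring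
    by_cases hcase : m + 1 < n
    · -- non-wrapping case
      have hi1 : k + 1 + (((m + 1 : ℕ)) : Fin n) = i + 1 := by
        rw [← hi_eq]; push_cast; open Fin.CommRing in ring
      have h2 := hlam (m + 1) hcase
      rw [hi1] at h2
      have hlami := hlam m hmlt
      rw [hi_eq] at hlami
      have e1 : lam (i + 1) = lam i * Real.sqrt (a / b) := by
        rw [h2, Finset.prod_range_succ, ← hlami, hi_eq]
      have hsq1 : Real.sqrt (a / b) * b ≤ 1 := by
        have h3 : Real.sqrt (a / b) * b = Real.sqrt (a * b) := by
          rw [← Real.sqrt_sq hb.le, ← Real.sqrt_mul (by positivity)]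
          congr 1; field_simp; rw [Real.sq_sqrt (by positivity)]
        rw [h3, ← Real.sqrt_one]
        exact Real.sqrt_le_sqrt hab
      have hsq2 : a ≤ Real.sqrt (a / b) := by
        rw [Real.le_sqrt' ha, le_div_iff₀ hb]
        nlinarith
      constructor
      · calc lam (i + 1) * b = lam i * (Real.sqrt (a / b) * b) := by rw [e1]; ring
          _ ≤ lam i * 1 := mul_le_mul_of_nonneg_left hsq1 (lam_nonneg i)
          _ = lam i := mul_one _
      · rw [e1]
        exact mul_le_mul_of_nonneg_left hsq2 (lam_nonneg i)
    · -- wrapping case: m = n - 1, i = k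
      have hm1 : m = n - 1 := by omega
      have hwrap : (((n - 1 : ℕ)) : Fin n) + 1 = 0 := by
        have : (((n - 1 : ℕ)) : Fin n) + 1 = (((n - 1 + 1 : ℕ)) : Fin n) := by push_cast; open Fin.CommRing in ring
        rw [this, Nat.sub_add_cancel (by omega), Fin.natCast_self]
      have hik : i = k := by
        rw [← hi_eq, hm1]
        calc k + 1 + (((n - 1 : ℕ)) : Fin n) = k + ((((n - 1 : ℕ)) : Fin n) + 1) := by open Fin.CommRing in ring
          _ = k + 0 := by rw [hwrap]
          _ = k := add_zero k
      have hik1 : i + 1 = k + 1 := by rw [hik]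
      -- lam (k+1) = 1
      have hlamk1 : lam (i + 1) = 1 := by
        have h0 := hlam 0 hnpos
        simpa [hik1] using h0
      -- lam i = sqrt of the partial product
      set g : ℕ → ℝ := fun t => ℓ (k + 1 + (t : Fin n)) (k + 1 + (t : Fin n) + 1) /
          ℓ (k + 1 + (t : Fin n) + 1) (k + 1 + (t : Fin n)) with hg_def
      have hg_pos : ∀ t : ℕ, 0 < g t :=
        fun t => div_pos (hℓ_pos _ _ (Or.inr rfl)) (hℓ_pos _ _ (Or.inl (by open Fin.CommRing in ring)))
      set L : ℝ := ∏ t ∈ Finset.range (n - 1), g t with hL_def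
      have hLpos : 0 < L := Finset.prod_pos fun t _ => hg_pos t
      have hlami : lam i = Real.sqrt L := by
        have h3 := hlam m hmlt
        rw [hi_eq] at h3
        rw [h3, hm1, sqrt_prod_aux _ _ (fun t _ => (hg_pos t).le)]
      -- the full cyclic product
      set P : ℝ := ∏ j : Fin n, ℓ j (j + 1) / ℓ (j + 1) j with hP_def
      have hPfull : ∏ t ∈ Finset.range n, g t = P := by
        rw [← Fin.prod_univ_eq_prod_range g n, hP_def]
        calc ∏ j : Fin n, g j.val
            = ∏ j : Fin n, ℓ (k + 1 + j) (k + 1 + j + 1) / ℓ (k + 1 + j + 1) (k + 1 + j) := by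
              refine Finset.prod_congr rfl fun j _ => ?_
              rw [hg_def]; simp [Fin.cast_val_eq_self]
          _ = ∏ j : Fin n, ℓ j (j + 1) / ℓ (j + 1) j :=
              Equiv.prod_comp (Equiv.addLeft (k + 1)) (fun j => ℓ j (j + 1) / ℓ (j + 1) j)
      have h4 : k + 1 + (((n - 1 : ℕ)) : Fin n) = i := by rw [← hi_eq, hm1]
      have hglast : g (n - 1) = a / b := by
        simp only [hg_def, h4, ha_def, hb_def]
      have hPsplit : L * (a / b) = P := by
        rw [← hPfull]
        have : n = (n - 1) + 1 := by omega
        rw [this, Finset.prod_range_succ, ← hglast]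
      have hLval : L = P * b / a := by
        field_simp at hPsplit ⊢
        nlinarith [hPsplit]
      have hP_lo : a * b ≤ P := by rw [ha_def, hb_def, hik]; exact hsg_cyclen_lo
      have hP_hi : P * (a * b) ≤ 1 := by
        have h5 : P ≤ 1 / (a * b) := by rw [ha_def, hb_def, hik]; exact hsg_cyclen_hi
        calc P * (a * b) ≤ (1 / (a * b)) * (a * b) :=
              mul_le_mul_of_nonneg_right h5 (by positivity)
          _ = 1 := by field_simp
      constructor
      · -- b ≤ sqrt L
        rw [hlamk1, one_mul, hlami, Real.le_sqrt' hb, hLval, le_div_iff₀ ha]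
        nlinarith
      · -- sqrt L * a ≤ 1
        rw [hlamk1, hlami]
        have h6 : Real.sqrt L * a = Real.sqrt (L * a ^ 2) := by
          rw [Real.sqrt_mul hLpos.le, Real.sqrt_sq ha.le]
        rw [h6, ← Real.sqrt_one]
        apply Real.sqrt_le_sqrt
        rw [hLval]
        have : P * b / a * a ^ 2 = P * (a * b) := by field_simp
        rw [this]; exact hP_hi
  obtain ⟨key1, key2⟩ := key
  have hη1 : 0 ≤ η (i + 1) i x := (hησ_nonneg (i + 1) i (Or.inl (by open Fin.CommRing in ring)) x hx).1
  have hη2 : 0 ≤ η i (i + 1) x := (hησ_nonneg i (i + 1) (Or.inr rfl) x hx).1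
  have hb1 := hbound (i + 1) i (Or.inl (by open Fin.CommRing in ring)) x hx
  have hb2 := hbound i (i + 1) (Or.inr rfl) x hx
  constructor
  · calc lam (i + 1) * σ (i + 1) i x ≤ lam (i + 1) * (b * η (i + 1) i x) :=
        mul_le_mul_of_nonneg_left hb1 (lam_nonneg (i + 1))
      _ = (lam (i + 1) * b) * η (i + 1) i x := by ring
      _ ≤ lam i * η (i + 1) i x := mul_le_mul_of_nonneg_right key1 hη1
  · calc lam i * σ i (i + 1) x ≤ lam i * (a * η i (i + 1) x) :=
        mul_le_mul_of_nonneg_left hb2 (lam_nonneg i)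
      _ = (lam i * a) * η i (i + 1) x := by ring
      _ ≤ lam (i + 1) * η i (i + 1) x := mul_le_mul_of_nonneg_right key2 hη2
end

section
/- Let n ≥ 2 with circular indices modulo n. Consider the network ẋ_i = −η_{i−1,i}(x) + σ_{i,i−1}(x) − η_{i+1,i}(x) + σ_{i,i+1}(x) − θ_i(x_i) + κ_i(w_i), i = 1,…,n, where η_{j,i}, σ_{j,i} : [0,∞)^n → [0,∞) are locally Lipschitz with η_{i−1,i}(x) = η_{i+1,i}(x) = 0 whenever x_i = 0, θ_i is of class P and locally Lipschitz, and κ_i is of class K or identically zero. Suppose σ_{i,j}(x) ≤ ℓ_{i,j} η_{i,j}(x) with ℓ_{i,j} > 0 satisfying ℓ_{i,i+1} ℓ_{i+1,i} ≤ 1 for all i and, for some k, ℓ_{k,k+1} ℓ_{k+1,k} ≤ ∏_{i=1}^{n} (ℓ_{i,i+1}/ℓ_{i+1,i}) ≤ 1/(ℓ_{k,k+1} ℓ_{k+1,k}). Define λ_i = ∏_{j=k+2}^{i} √(ℓ_{j−1,j}/ℓ_{j,j−1}) for i ∈ {k+1,…,k+n}. Then along any differentiable solution x : [0,∞) → [0,∞)^n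 with measurable locally bounded input w : [0,∞) → [0,∞)^n, the function V(x) = Σ_{i=1}^{n} λ_i x_i satisfies d/dt V(x(t)) ≤ Σ_{i=1}^{n} λ_i (−θ_i(x_i(t)) + κ_i(w_i(t))) for all t ≥ 0. -/
/-- A function of class K: continuous on [0,∞), strictly increasing on [0,∞),
and vanishing at 0. -/
def IsClassK (f : ℝ → ℝ) : Prop :=
  ContinuousOn f (Set.Ici 0) ∧ StrictMonoOn f (Set.Ici 0) ∧ f 0 = 0

/-- A function of class P: continuous on [0,∞), vanishing at 0, positive on (0,∞). -/
def IsClassP (f : ℝ → ℝ) : Prop :=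
  ContinuousOn f (Set.Ici 0) ∧ f 0 = 0 ∧ ∀ s : ℝ, 0 < s → 0 < f s

open Fin.NatCast

/-- Along any nonnegative solution of the circular balancing network
ẋᵢ = -η_{i-1,i}(x) + σ_{i,i-1}(x) - η_{i+1,i}(x) + σ_{i,i+1}(x) - θᵢ(xᵢ) + κᵢ(wᵢ),
under the cyclic small-gain conditions, the weighted sum V(x) = Σ λᵢ xᵢ with the
small-gain weights λ satisfies dV/dt ≤ Σ λᵢ (-θᵢ(xᵢ) + κᵢ(wᵢ)). -/
theorem balancing_network_lyapunov_decrease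
    (n : ℕ) [NeZero n] (hn : 2 ≤ n)
    (η σ : Fin n → Fin n → (Fin n → ℝ) → ℝ)
    (hη_lip : ∀ i j : Fin n, LocallyLipschitz (η i j))
    (hσ_lip : ∀ i j : Fin n, LocallyLipschitz (σ i j))
    (hησ_nonneg : ∀ i j : Fin n, (j = i - 1 ∨ j = i + 1) →
      ∀ x : Fin n → ℝ, (∀ l, 0 ≤ x l) → 0 ≤ η i j x ∧ 0 ≤ σ i j x)
    (hη_zero : ∀ i : Fin n, ∀ x : Fin n → ℝ, (∀ l, 0 ≤ x l) → x i = 0 →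
      η (i - 1) i x = 0 ∧ η (i + 1) i x = 0)
    (θ : Fin n → ℝ → ℝ)
    (hθ : ∀ i, IsClassP (θ i) ∧ LocallyLipschitz (θ i))
    (κ : Fin n → ℝ → ℝ)
    (hκ : ∀ i, IsClassK (κ i) ∨ κ i = 0)
    (ℓ : Fin n → Fin n → ℝ)
    (hℓ_pos : ∀ i j : Fin n, (j = i - 1 ∨ j = i + 1) → 0 < ℓ i j)
    (hbound : ∀ i j : Fin n, (j = i - 1 ∨ j = i + 1) →
      ∀ x : Fin n → ℝ, (∀ l, 0 ≤ x l) → σ i j x ≤ ℓ i j * η i j x)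
    (hsg_cycle1 : ∀ i : Fin n, ℓ i (i + 1) * ℓ (i + 1) i ≤ 1)
    (k : Fin n)
    (hsg_cyclen_lo : ℓ k (k + 1) * ℓ (k + 1) k ≤ ∏ i : Fin n, ℓ i (i + 1) / ℓ (i + 1) i)
    (hsg_cyclen_hi : ∏ i : Fin n, ℓ i (i + 1) / ℓ (i + 1) i ≤
      1 / (ℓ k (k + 1) * ℓ (k + 1) k))
    (lam : Fin n → ℝ)
    (hlam : ∀ m : ℕ, m < n →
      lam (k + 1 + (m : Fin n)) =
        ∏ t ∈ Finset.range m,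
          Real.sqrt (ℓ (k + 1 + (t : Fin n)) (k + 1 + (t : Fin n) + 1) /
            ℓ (k + 1 + (t : Fin n) + 1) (k + 1 + (t : Fin n))))
    (w : ℝ → Fin n → ℝ) (hw_meas : Measurable w)
    (hw_nonneg : ∀ t ≥ (0:ℝ), ∀ i, 0 ≤ w t i)
    (hw_locbdd : ∀ T : ℝ, ∃ C : ℝ, ∀ t ∈ Set.Icc (0:ℝ) T, ∀ i, |w t i| ≤ C)
    (x : ℝ → Fin n → ℝ)
    (hx_nonneg : ∀ t ≥ (0:ℝ), ∀ i, 0 ≤ x t i)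
    (hx_sol : ∀ t ≥ (0:ℝ), ∀ i : Fin n,
      HasDerivAt (fun s => x s i)
        (-η (i - 1) i (x t) + σ i (i - 1) (x t) - η (i + 1) i (x t) +
          σ i (i + 1) (x t) - θ i (x t i) + κ i (w t i)) t) :
    ∀ t ≥ (0:ℝ),
      deriv (fun s => ∑ i : Fin n, lam i * x s i) t ≤
        ∑ i : Fin n, lam i * (-θ i (x t i) + κ i (w t i)) := by
  intro t ht
  have hy_nonneg : ∀ l, 0 ≤ x t l := hx_nonneg t ht
  set a : ℕ → Fin n := fun m => k + 1 + (m : Fin n) with ha_def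
  set r : ℕ → ℝ := fun m => ℓ (a m) (a m + 1) / ℓ (a m + 1) (a m) with hr_def
  have hlam' : ∀ m : ℕ, m < n → lam (a m) = ∏ t ∈ Finset.range m, Real.sqrt (r t) := by
    intro m hm
    simpa [ha_def, hr_def] using hlam m hm
  have hℓA : ∀ i : Fin n, 0 < ℓ i (i + 1) := fun i => hℓ_pos i (i + 1) (Or.inr rfl)
  have hℓB : ∀ i : Fin n, 0 < ℓ (i + 1) i := fun i =>
    hℓ_pos (i + 1) i (Or.inl (add_sub_cancel_right i 1).symm)
  have hr_pos : ∀ m, 0 < r m := fun m => div_pos (hℓA (a m)) (hℓB (a m))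
  have ha_surj : ∀ i : Fin n, ∃ m : ℕ, m < n ∧ a m = i := by
    intro i
    refine ⟨(i - (k + 1)).val, (i - (k + 1)).isLt, ?_⟩
    simp only [ha_def, Fin.cast_val_eq_self]
    abel
  have hlam_pos : ∀ i : Fin n, 0 < lam i := by
    intro i
    obtain ⟨m, hm, ham⟩ := ha_surj i
    rw [← ham, hlam' m hm]
    exact Finset.prod_pos fun t _ => Real.sqrt_pos.2 (hr_pos t)
  have hedge : ∀ i : Fin n, lam i * ℓ i (i + 1) ≤ lam (i + 1) ∧
      lam (i + 1) * ℓ (i + 1) i ≤ lam i := by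
    intro i
    obtain ⟨m, hm, ham⟩ := ha_surj i
    rw [← ham]
    by_cases hcase : m + 1 < n
    · have ham1 : a (m + 1) = a m + 1 := by
        simp only [ha_def]
        push_cast
        abel
      have hL1 : lam (a m + 1) = lam (a m) * Real.sqrt (r m) := by
        rw [← ham1, hlam' (m + 1) hcase, Finset.prod_range_succ, ← hlam' m hm]
      have hA : 0 < ℓ (a m) (a m + 1) := hℓA (a m)
      have hB : 0 < ℓ (a m + 1) (a m) := hℓB (a m)
      have hAB : ℓ (a m) (a m + 1) * ℓ (a m + 1) (a m) ≤ 1 := hsg_cycle1 (a m)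
      have hrm : r m = ℓ (a m) (a m + 1) / ℓ (a m + 1) (a m) := by simp [hr_def]
      have hs0 : 0 ≤ Real.sqrt (r m) := Real.sqrt_nonneg _
      have hs2 : Real.sqrt (r m) ^ 2 = ℓ (a m) (a m + 1) / ℓ (a m + 1) (a m) := by
        rw [Real.sq_sqrt (hr_pos m).le, hrm]
      have hAs : ℓ (a m) (a m + 1) ≤ Real.sqrt (r m) := by
        have h1 : ℓ (a m) (a m + 1) ^ 2 ≤ Real.sqrt (r m) ^ 2 := by
          rw [hs2, le_div_iff₀ hB]
          nlinarith
        exact le_of_pow_le_pow_left₀ two_ne_zero hs0 h1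
      have hsB : Real.sqrt (r m) * ℓ (a m + 1) (a m) ≤ 1 := by
        have h1 : (Real.sqrt (r m) * ℓ (a m + 1) (a m)) ^ 2 ≤ 1 ^ 2 := by
          rw [mul_pow, hs2]
          have he : ℓ (a m) (a m + 1) / ℓ (a m + 1) (a m) * ℓ (a m + 1) (a m) ^ 2
              = ℓ (a m) (a m + 1) * ℓ (a m + 1) (a m) := by
            field_simp
          rw [he]
          nlinarith
        exact le_of_pow_le_pow_left₀ two_ne_zero zero_le_one h1
      constructor
      · rw [hL1]
        exact mul_le_mul_of_nonneg_left hAs (hlam_pos (a m)).le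
      · rw [hL1]
        calc lam (a m) * Real.sqrt (r m) * ℓ (a m + 1) (a m)
            = lam (a m) * (Real.sqrt (r m) * ℓ (a m + 1) (a m)) := by ring
          _ ≤ lam (a m) * 1 := mul_le_mul_of_nonneg_left hsB (hlam_pos (a m)).le
          _ = lam (a m) := mul_one _
    · have hmn : m + 1 = n := by omega
      have hm1 : ((m : Fin n) + 1) = 0 := by
        rw [← Nat.cast_one, ← Nat.cast_add, hmn, Fin.natCast_self]
      have ham1 : a m + 1 = k + 1 := by
        show k + 1 + (m : Fin n) + 1 = k + 1
        rw [add_assoc (k + 1), hm1, add_zero]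
      have hamk : a m = k := by
        have h2 : a m = (a m + 1) - 1 := by abel
        rw [h2, ham1]
        abel
      have hrm : r m = ℓ k (k + 1) / ℓ (k + 1) k := by
        simp only [hr_def]
        rw [hamk]
      rw [hamk]
      have hlamk1 : lam (k + 1) = 1 := by
        have h0 := hlam' 0 (by omega)
        simpa [ha_def] using h0
      have hA : 0 < ℓ k (k + 1) := hℓA k
      have hB : 0 < ℓ (k + 1) k := hℓB k
      have hLf : lam k = ∏ t ∈ Finset.range m, Real.sqrt (r t) := by
        rw [← hamk]; exact hlam' m hm
      have hL2 : lam k ^ 2 = ∏ t ∈ Finset.range m, r t := by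
        rw [hLf, ← Finset.prod_pow]
        exact Finset.prod_congr rfl fun t _ => Real.sq_sqrt (hr_pos t).le
      have hP : (∏ i : Fin n, ℓ i (i + 1) / ℓ (i + 1) i)
          = (∏ t ∈ Finset.range m, r t) * r m := by
        rw [← Finset.prod_range_succ, hmn,
          ← Fin.prod_univ_eq_prod_range r n,
          ← Equiv.prod_comp (Equiv.addLeft (k + 1))
            (fun i : Fin n => ℓ i (i + 1) / ℓ (i + 1) i)]
        apply Finset.prod_congr rfl
        intro i _
        simp only [ha_def, hr_def, Equiv.coe_addLeft, Fin.cast_val_eq_self]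
      set Q := ∏ t ∈ Finset.range m, r t with hQ_def
      have hlo : ℓ k (k + 1) * ℓ (k + 1) k ≤ Q * (ℓ k (k + 1) / ℓ (k + 1) k) := by
        rw [← hrm, ← hP]; exact hsg_cyclen_lo
      have hhi : Q * (ℓ k (k + 1) / ℓ (k + 1) k) ≤ 1 / (ℓ k (k + 1) * ℓ (k + 1) k) := by
        rw [← hrm, ← hP]; exact hsg_cyclen_hi
      have hhi' : Q * ℓ k (k + 1) ^ 2 ≤ 1 := by
        have h := mul_le_mul_of_nonneg_right hhi (le_of_lt (mul_pos hA hB))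
        have e1 : Q * (ℓ k (k + 1) / ℓ (k + 1) k) * (ℓ k (k + 1) * ℓ (k + 1) k)
            = Q * ℓ k (k + 1) ^ 2 := by field_simp
        have e2 : 1 / (ℓ k (k + 1) * ℓ (k + 1) k) * (ℓ k (k + 1) * ℓ (k + 1) k) = 1 := by
          field_simp
        rw [e1, e2] at h
        exact h
      have hlo' : ℓ (k + 1) k ^ 2 ≤ Q := by
        have h := mul_le_mul_of_nonneg_right hlo hB.le
        have e1 : Q * (ℓ k (k + 1) / ℓ (k + 1) k) * ℓ (k + 1) k = Q * ℓ k (k + 1) := by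
          field_simp
        rw [e1] at h
        have h2 : ℓ k (k + 1) * ℓ (k + 1) k ^ 2 ≤ ℓ k (k + 1) * Q := by nlinarith
        exact le_of_mul_le_mul_left h2 hA
      constructor
      · rw [hlamk1]
        have h1 : (lam k * ℓ k (k + 1)) ^ 2 ≤ 1 ^ 2 := by
          rw [mul_pow, hL2, one_pow]
          exact hhi'
        exact le_of_pow_le_pow_left₀ two_ne_zero zero_le_one h1
      · rw [hlamk1, one_mul]
        have h1 : ℓ (k + 1) k ^ 2 ≤ lam k ^ 2 := by
          rw [hL2]; exact hlo'
        exact le_of_pow_le_pow_left₀ two_ne_zero (hlam_pos k).le h1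
  -- derivative of V
  have hV : HasDerivAt (fun s => ∑ i : Fin n, lam i * x s i)
      (∑ i : Fin n, lam i * (-η (i - 1) i (x t) + σ i (i - 1) (x t) - η (i + 1) i (x t) +
          σ i (i + 1) (x t) - θ i (x t i) + κ i (w t i))) t :=
    HasDerivAt.fun_sum fun i _ => (hx_sol t ht i).const_mul (lam i)
  rw [hV.deriv]
  have hsplit : ∀ i : Fin n,
      lam i * (-η (i - 1) i (x t) + σ i (i - 1) (x t) - η (i + 1) i (x t) +
          σ i (i + 1) (x t) - θ i (x t i) + κ i (w t i))
      = (lam i * (σ i (i - 1) (x t) - η (i - 1) i (x t))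
        + lam i * (σ i (i + 1) (x t) - η (i + 1) i (x t)))
        + lam i * (-θ i (x t i) + κ i (w t i)) := fun i => by ring
  rw [Finset.sum_congr rfl fun i _ => hsplit i, Finset.sum_add_distrib]
  have hre : ∑ i : Fin n, (lam i * (σ i (i - 1) (x t) - η (i - 1) i (x t))
        + lam i * (σ i (i + 1) (x t) - η (i + 1) i (x t)))
      = ∑ i : Fin n, (lam (i + 1) * (σ (i + 1) i (x t) - η i (i + 1) (x t))
        + lam i * (σ i (i + 1) (x t) - η (i + 1) i (x t))) := by
    rw [Finset.sum_add_distrib, Finset.sum_add_distrib]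
    congr 1
    rw [← Equiv.sum_comp (Equiv.addRight (1 : Fin n))
      (fun i : Fin n => lam i * (σ i (i - 1) (x t) - η (i - 1) i (x t)))]
    apply Finset.sum_congr rfl
    intro i _
    simp [add_sub_cancel_right]
  have hzero : ∑ i : Fin n, (lam i * (σ i (i - 1) (x t) - η (i - 1) i (x t))
      + lam i * (σ i (i + 1) (x t) - η (i + 1) i (x t))) ≤ 0 := by
    rw [hre]
    apply Finset.sum_nonpos
    intro i _
    have hη1 : 0 ≤ η i (i + 1) (x t) :=
      (hησ_nonneg i (i + 1) (Or.inr rfl) (x t) hy_nonneg).1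
    have hη2 : 0 ≤ η (i + 1) i (x t) :=
      (hησ_nonneg (i + 1) i (Or.inl (add_sub_cancel_right i 1).symm) (x t) hy_nonneg).1
    have hb1 : σ i (i + 1) (x t) ≤ ℓ i (i + 1) * η i (i + 1) (x t) :=
      hbound i (i + 1) (Or.inr rfl) (x t) hy_nonneg
    have hb2 : σ (i + 1) i (x t) ≤ ℓ (i + 1) i * η (i + 1) i (x t) :=
      hbound (i + 1) i (Or.inl (add_sub_cancel_right i 1).symm) (x t) hy_nonneg
    have he1 := (hedge i).1
    have he2 := (hedge i).2
    have hp1 := hlam_pos i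
    have hp2 := hlam_pos (i + 1)
    nlinarith [mul_le_mul_of_nonneg_left hb1 hp1.le,
      mul_le_mul_of_nonneg_left hb2 hp2.le,
      mul_le_mul_of_nonneg_right he1 hη1,
      mul_le_mul_of_nonneg_right he2 hη2]
  linarith [hzero]
end

section
/- Under the hypotheses of the balancing network ẋ_i = −η_{i−1,i}(x) + σ_{i,i−1}(x) − η_{i+1,i}(x) + σ_{i,i+1}(x) − θ_i(x_i) + κ_i(w_i) (circular indices, locally Lipschitz nonnegative rates with η_{i−1,i}(x) = η_{i+1,i}(x) = 0 when x_i = 0, θ_i of class P, κ_i of class K or zero, σ_{i,j}(x) ≤ ℓ_{i,j} η_{i,j}(x) with ℓ_{i,j} > 0, ℓ_{i,i+1} ℓ_{i+1,i} ≤ 1 for all i, and ℓ_{k,k+1} ℓ_{k+1,k} ≤ ∏_{i=1}^{n}(ℓ_{i,i+1}/ℓ_{i+1,i}) ≤ 1/(ℓ_{k,k+1} ℓ_{k+1,k}) for some k), let λ_i = ∏_{j=k+2}^{i} √(ℓ_{j−1,j}/ℓ_{j,j−1}) and V(x) = Σ_i λ_i x_i, and let f_i(x,w) denote the right-hand side of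 the i-th equation. Then there exist α of class P and σ of class K such that Σ_i λ_i f_i(x,w) ≤ −α(V(x)) + σ(|w|) for all x ∈ [0,∞)^n and w ∈ [0,∞)^n; moreover α can be taken of class K if every θ_i is of class K, and of class K∞ if every θ_i is of class K∞. -/
/-- A function of class K∞: class K and unbounded. -/
def IsClassKInfty (f : ℝ → ℝ) : Prop :=
  IsClassK f ∧ Filter.Tendsto f Filter.atTop Filter.atTop

/-- The right-hand side of the i-th equation of the circular balancing network. -/
def netRHS (n : ℕ) [NeZero n] (η σ : Fin n → Fin n → (Fin n → ℝ) → ℝ)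
    (θ κ : Fin n → ℝ → ℝ) (x w : Fin n → ℝ) (i : Fin n) : ℝ :=
  -η (i - 1) i x + σ i (i - 1) x - η (i + 1) i x + σ i (i + 1) x
    - θ i (x i) + κ i (w i)

open Fin.NatCast

section helper
open Finset Filter Set

lemma lam_edges (n : ℕ) [NeZero n]
    (ℓ : Fin n → Fin n → ℝ)
    (hℓ_pos : ∀ i j : Fin n, (j = i - 1 ∨ j = i + 1) → 0 < ℓ i j)
    (hsg_cycle1 : ∀ i : Fin n, ℓ i (i + 1) * ℓ (i + 1) i ≤ 1)
    (k : Fin n)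
    (hsg_cyclen_lo : ℓ k (k + 1) * ℓ (k + 1) k ≤ ∏ i : Fin n, ℓ i (i + 1) / ℓ (i + 1) i)
    (hsg_cyclen_hi : ∏ i : Fin n, ℓ i (i + 1) / ℓ (i + 1) i ≤
      1 / (ℓ k (k + 1) * ℓ (k + 1) k))
    (lam : Fin n → ℝ)
    (hlam : ∀ m : ℕ, m < n →
      lam (k + 1 + (m : Fin n)) =
        ∏ t ∈ Finset.range m,
          Real.sqrt (ℓ (k + 1 + (t : Fin n)) (k + 1 + (t : Fin n) + 1) /
            ℓ (k + 1 + (t : Fin n) + 1) (k + 1 + (t : Fin n)))) :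
    ∀ j : Fin n, 0 < lam j ∧ lam j * ℓ j (j + 1) ≤ lam (j + 1) ∧
      lam (j + 1) * ℓ (j + 1) j ≤ lam j := by
  have hn0 : 0 < n := Nat.pos_of_ne_zero (NeZero.ne n)
  set p : ℕ → Fin n := fun m => k + 1 + (m : Fin n) with hp
  set r : ℕ → ℝ := fun t => ℓ (p t) (p t + 1) / ℓ (p t + 1) (p t) with hr
  have hrdef : ∀ t, r t = ℓ (p t) (p t + 1) / ℓ (p t + 1) (p t) := fun t => rfl
  have hl1 : ∀ j : Fin n, 0 < ℓ j (j + 1) := fun j => hℓ_pos j (j+1) (Or.inr rfl)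
  have hl2 : ∀ j : Fin n, 0 < ℓ (j + 1) j := fun j =>
    hℓ_pos (j+1) j (Or.inl (by rw [add_sub_cancel_right]))
  have hr_pos : ∀ t, 0 < r t := fun t => div_pos (hl1 _) (hl2 _)
  have hp_succ : ∀ m : ℕ, p (m + 1) = p m + 1 := by
    intro m; simp only [hp]; rw [Nat.cast_succ]; exact (add_assoc _ _ _).symm
  have hlam' : ∀ m : ℕ, m < n → lam (p m) = ∏ t ∈ range m, Real.sqrt (r t) :=
    fun m hm => hlam m hm
  have hlam_pos : ∀ m : ℕ, m < n → 0 < lam (p m) := by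
    intro m hm; rw [hlam' m hm]
    exact Finset.prod_pos fun t _ => Real.sqrt_pos.2 (hr_pos t)
  have hsq : ∀ m : ℕ, m < n → lam (p m) ^ 2 = ∏ t ∈ range m, r t := by
    intro m hm; rw [hlam' m hm, ← Finset.prod_pow]
    exact Finset.prod_congr rfl fun t _ => Real.sq_sqrt (hr_pos t).le
  -- non-wrap edges
  have hedge : ∀ m : ℕ, m + 1 < n →
      lam (p m) * ℓ (p m) (p m + 1) ≤ lam (p m + 1) ∧
      lam (p m + 1) * ℓ (p m + 1) (p m) ≤ lam (p m) := by
    intro m hm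
    have hmn : m < n := Nat.lt_of_succ_lt hm
    have hrec : lam (p m + 1) = lam (p m) * Real.sqrt (r m) := by
      rw [← hp_succ, hlam' _ hm, hlam' _ hmn, Finset.prod_range_succ]
    have hc1 := hsg_cycle1 (p m)
    have h1 : ℓ (p m) (p m + 1) ≤ Real.sqrt (r m) := by
      rw [Real.le_sqrt (hl1 (p m)).le (hr_pos m).le, hrdef, le_div_iff₀ (hl2 (p m))]
      nlinarith [hl1 (p m), hl2 (p m)]
    have h2 : Real.sqrt (r m) * ℓ (p m + 1) (p m) ≤ 1 := by
      have hs : Real.sqrt (r m) ≤ 1 / ℓ (p m + 1) (p m) := by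
        rw [show (1:ℝ) / ℓ (p m + 1) (p m) = Real.sqrt ((1 / ℓ (p m + 1) (p m))^2) by
          rw [Real.sqrt_sq (one_div_nonneg.2 (hl2 (p m)).le)]]
        apply Real.sqrt_le_sqrt
        rw [hrdef, div_pow, one_pow, div_le_div_iff₀ (hl2 (p m)) (pow_pos (hl2 (p m)) 2)]
        nlinarith [hl1 (p m), hl2 (p m)]
      calc Real.sqrt (r m) * ℓ (p m + 1) (p m) ≤ (1 / ℓ (p m + 1) (p m)) * ℓ (p m + 1) (p m) :=
            mul_le_mul_of_nonneg_right hs (hl2 (p m)).le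
        _ = 1 := by rw [one_div, inv_mul_cancel₀ (hl2 (p m)).ne']
    constructor
    · rw [hrec]
      exact mul_le_mul_of_nonneg_left h1 (hlam_pos m hmn).le
    · rw [hrec]
      calc lam (p m) * Real.sqrt (r m) * ℓ (p m + 1) (p m)
          = lam (p m) * (Real.sqrt (r m) * ℓ (p m + 1) (p m)) := by ring
        _ ≤ lam (p m) * 1 := mul_le_mul_of_nonneg_left h2 (hlam_pos m hmn).le
        _ = lam (p m) := mul_one _
  -- wrap edge
  have hpn1 : p (n - 1) = k := by
    have h1 : p ((n-1)+1) = p (n-1) + 1 := hp_succ _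
    have hn1 : (n - 1) + 1 = n := Nat.succ_pred_eq_of_pos hn0
    have h0 : p n = p 0 := by simp only [hp, Fin.natCast_self, Nat.cast_zero]
    rw [hn1] at h1
    have hp0 : p 0 = k + 1 := by simp [hp]
    have h2 : p (n-1) + 1 = k + 1 := by rw [← h1, h0, hp0]
    have := congrArg (fun z => z - 1) h2
    simpa using this
  have hP : (∏ i : Fin n, ℓ i (i + 1) / ℓ (i + 1) i) = ∏ t ∈ range n, r t := by
    have e1 : (∏ i : Fin n, ℓ i (i + 1) / ℓ (i + 1) i)
        = ∏ i : Fin n, ℓ (k+1+i) (k+1+i + 1) / ℓ (k+1+i + 1) (k+1+i) :=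
      (Fintype.prod_equiv (Equiv.addLeft (k+1))
        (fun i => ℓ (k+1+i) (k+1+i+1) / ℓ (k+1+i+1) (k+1+i))
        (fun i => ℓ i (i+1) / ℓ (i+1) i) (fun i => rfl)).symm
    rw [e1]
    have e2 : ∀ i : Fin n, ℓ (k+1+i) (k+1+i + 1) / ℓ (k+1+i + 1) (k+1+i) = r (i : ℕ) := by
      intro i; rw [hrdef]; simp only [hp, Fin.cast_val_eq_self]
    rw [Finset.prod_congr rfl (fun i _ => e2 i)]
    exact Fin.prod_univ_eq_prod_range (fun t => r t) n
  have hrsplit : ∏ t ∈ range n, r t = (∏ t ∈ range (n-1), r t) * r (n-1) := by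
    conv_lhs => rw [show n = (n-1)+1 from (Nat.succ_pred_eq_of_pos hn0).symm]
    exact Finset.prod_range_succ _ _
  have hkm : n - 1 < n := Nat.pred_lt hn0.ne'
  have hlamk2 : lam k ^ 2 = ∏ t ∈ range (n-1), r t := by
    rw [← hpn1]; exact hsq _ hkm
  have hrn1 : r (n-1) = ℓ k (k+1) / ℓ (k+1) k := by rw [hrdef, hpn1]
  have hlamk_pos : 0 < lam k := by rw [← hpn1]; exact hlam_pos _ hkm
  have hlamk1 : lam (k + 1) = 1 := by
    have := hlam' 0 hn0
    simpa [hp] using this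
  have ha := hl1 k; have hb := hl2 k
  have hPval : (∏ i : Fin n, ℓ i (i + 1) / ℓ (i + 1) i)
      = lam k ^2 * (ℓ k (k+1) / ℓ (k+1) k) := by
    rw [hP, hrsplit, hlamk2, hrn1]
  have hwrap1 : lam k * ℓ k (k + 1) ≤ lam (k+1) := by
    rw [hlamk1]
    have h2 : lam k ^2 * (ℓ k (k+1) / ℓ (k+1) k) ≤ 1 / (ℓ k (k + 1) * ℓ (k + 1) k) := by
      rw [← hPval]; exact hsg_cyclen_hi
    have h2' : lam k ^2 * (ℓ k (k+1) / ℓ (k+1) k) * (ℓ k (k + 1) * ℓ (k + 1) k) ≤ 1 :=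
      (le_div_iff₀ (mul_pos ha hb)).1 h2
    have h3 : (lam k * ℓ k (k+1))^2 ≤ 1 := by
      have he : (lam k * ℓ k (k+1))^2
          = lam k ^2 * (ℓ k (k+1) / ℓ (k+1) k) * (ℓ k (k + 1) * ℓ (k + 1) k) := by
        field_simp
      rw [he]; exact h2'
    nlinarith [mul_pos hlamk_pos ha]
  have hwrap2 : lam (k+1) * ℓ (k + 1) k ≤ lam k := by
    rw [hlamk1, one_mul]
    have h2 : ℓ k (k + 1) * ℓ (k + 1) k ≤ lam k ^2 * (ℓ k (k+1) / ℓ (k+1) k) := by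
      rw [← hPval]; exact hsg_cyclen_lo
    have h2' : ℓ k (k + 1) * ℓ (k + 1) k * ℓ (k + 1) k ≤ lam k ^2 * ℓ k (k+1) := by
      rw [show lam k ^2 * (ℓ k (k+1) / ℓ (k+1) k) = lam k ^2 * ℓ k (k+1) / ℓ (k+1) k by ring,
        le_div_iff₀ hb] at h2
      linarith
    have h3 : (ℓ (k+1) k)^2 ≤ lam k ^ 2 := by nlinarith
    nlinarith
  -- assemble
  intro j
  obtain ⟨m, hm, rfl⟩ : ∃ m : ℕ, m < n ∧ p m = j := by
    refine ⟨(j - (k+1)).val, (j - (k+1)).isLt, ?_⟩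
    simp only [hp, Fin.cast_val_eq_self]
    abel
  refine ⟨hlam_pos m hm, ?_⟩
  rcases Nat.lt_or_ge (m+1) n with hlt | hge
  · exact hedge m hlt
  · have hm1 : m = n - 1 := by omega
    subst hm1
    rw [hpn1]
    exact ⟨hwrap1, hwrap2⟩

lemma coupling_sum (n : ℕ) [NeZero n]
    (η σ : Fin n → Fin n → (Fin n → ℝ) → ℝ)
    (hησ_nonneg : ∀ i j : Fin n, (j = i - 1 ∨ j = i + 1) →
      ∀ x : Fin n → ℝ, (∀ l, 0 ≤ x l) → 0 ≤ η i j x ∧ 0 ≤ σ i j x)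
    (ℓ : Fin n → Fin n → ℝ)
    (hbound : ∀ i j : Fin n, (j = i - 1 ∨ j = i + 1) →
      ∀ x : Fin n → ℝ, (∀ l, 0 ≤ x l) → σ i j x ≤ ℓ i j * η i j x)
    (lam : Fin n → ℝ)
    (hedges : ∀ j : Fin n, 0 < lam j ∧ lam j * ℓ j (j + 1) ≤ lam (j + 1) ∧
      lam (j + 1) * ℓ (j + 1) j ≤ lam j)
    (x : Fin n → ℝ) (hx : ∀ l, 0 ≤ x l) :
    ∑ i : Fin n, lam i * (-η (i - 1) i x + σ i (i - 1) x - η (i + 1) i x + σ i (i + 1) x)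
      ≤ 0 := by
  have hsub : ∀ j : Fin n, (j + 1) - 1 = j := fun j => add_sub_cancel_right j 1
  have h1 : ∑ i : Fin n, lam i * η (i - 1) i x = ∑ j : Fin n, lam (j + 1) * η j (j + 1) x :=
    (Fintype.sum_equiv (Equiv.addRight (1 : Fin n))
      (fun j => lam (j + 1) * η j (j + 1) x)
      (fun i => lam i * η (i - 1) i x)
      (fun j => by simp only [Equiv.coe_addRight, hsub])).symm
  have h2 : ∑ i : Fin n, lam i * σ i (i - 1) x = ∑ j : Fin n, lam (j + 1) * σ (j + 1) j x :=
    (Fintype.sum_equiv (Equiv.addRight (1 : Fin n))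
      (fun j => lam (j + 1) * σ (j + 1) j x)
      (fun i => lam i * σ i (i - 1) x)
      (fun j => by simp only [Equiv.coe_addRight, hsub])).symm
  have hsplit : ∑ i : Fin n, lam i * (-η (i - 1) i x + σ i (i - 1) x - η (i + 1) i x + σ i (i + 1) x)
      = ∑ j : Fin n, ((lam j * σ j (j + 1) x - lam (j + 1) * η j (j + 1) x)
          + (lam (j + 1) * σ (j + 1) j x - lam j * η (j + 1) j x)) := by
    have expand : ∀ i : Fin n,
        lam i * (-η (i - 1) i x + σ i (i - 1) x - η (i + 1) i x + σ i (i + 1) x)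
        = -(lam i * η (i - 1) i x) + lam i * σ i (i - 1) x
          - lam i * η (i + 1) i x + lam i * σ i (i + 1) x := fun i => by ring
    rw [Finset.sum_congr rfl (fun i _ => expand i)]
    simp only [Finset.sum_add_distrib, Finset.sum_sub_distrib, Finset.sum_neg_distrib]
    rw [h1, h2]
    ring
  rw [hsplit]
  apply Finset.sum_nonpos
  intro j _
  obtain ⟨hpos_j, he1, he2⟩ := hedges j
  have hpos_j1 : 0 < lam (j + 1) := (hedges (j+1)).1
  have hb1 : σ j (j + 1) x ≤ ℓ j (j + 1) * η j (j + 1) x := hbound j (j+1) (Or.inr rfl) x hx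
  have hb2 : σ (j + 1) j x ≤ ℓ (j + 1) j * η (j + 1) j x :=
    hbound (j+1) j (Or.inl (hsub j).symm) x hx
  have hetan1 : 0 ≤ η j (j + 1) x := (hησ_nonneg j (j+1) (Or.inr rfl) x hx).1
  have hetan2 : 0 ≤ η (j + 1) j x := (hησ_nonneg (j+1) j (Or.inl (hsub j).symm) x hx).1
  have t1 : lam j * σ j (j + 1) x - lam (j + 1) * η j (j + 1) x ≤ 0 := by
    have : lam j * σ j (j + 1) x ≤ lam j * (ℓ j (j + 1) * η j (j + 1) x) :=
      mul_le_mul_of_nonneg_left hb1 hpos_j.le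
    nlinarith [mul_le_mul_of_nonneg_right he1 hetan1]
  have t2 : lam (j + 1) * σ (j + 1) j x - lam j * η (j + 1) j x ≤ 0 := by
    have : lam (j + 1) * σ (j + 1) j x ≤ lam (j + 1) * (ℓ (j + 1) j * η (j + 1) j x) :=
      mul_le_mul_of_nonneg_left hb2 hpos_j1.le
    nlinarith [mul_le_mul_of_nonneg_right he2 hetan2]
  linarith

/-- Minimizer of a continuous function on [c*s, s]. -/
lemma intervalInf_min (φ : ℝ → ℝ) (hφ : ContinuousOn φ (Set.Ici 0))
    (c : ℝ) (hc : 0 < c) (hc1 : c ≤ 1) (s : ℝ) (hs : 0 ≤ s) :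
    ∃ r ∈ Set.Icc (c*s) s, sInf (φ '' Set.Icc (c*s) s) = φ r ∧
      ∀ r' ∈ Set.Icc (c*s) s, φ r ≤ φ r' := by
  have hle : c * s ≤ s := by nlinarith
  have hsub : Set.Icc (c*s) s ⊆ Set.Ici 0 := fun y hy => le_trans (by positivity) hy.1
  have hne : (Set.Icc (c*s) s).Nonempty := Set.nonempty_Icc.2 hle
  obtain ⟨r, hr, hmin⟩ := isCompact_Icc.exists_isMinOn hne (hφ.mono hsub)
  refine ⟨r, hr, ?_, fun r' hr' => hmin hr'⟩
  apply le_antisymm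
  · exact csInf_le ⟨φ r, fun b ⟨y, hy, hby⟩ => hby ▸ hmin hy⟩ ⟨r, hr, rfl⟩
  · exact le_csInf (hne.image φ) (fun b ⟨y, hy, hby⟩ => hby ▸ hmin hy)

/-- Continuity of the parametric interval infimum. -/
lemma intervalInf_continuousOn (φ : ℝ → ℝ) (hφ : ContinuousOn φ (Set.Ici 0))
    (c : ℝ) (hc : 0 < c) (hc1 : c ≤ 1) :
    ContinuousOn (fun s => sInf (φ '' Set.Icc (c*s) s)) (Set.Ici 0) := by
  set g : ℝ → ℝ := fun s => sInf (φ '' Set.Icc (c*s) s) with hg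
  -- key two-sided estimate
  have key : ∀ s₀ : ℝ, 0 ≤ s₀ → ∀ ε > (0:ℝ), ∃ δ > (0:ℝ), ∀ s₁ s₂ : ℝ,
      0 ≤ s₁ → 0 ≤ s₂ → s₁ ≤ s₀ + 1 → s₂ ≤ s₀ + 1 → |s₁ - s₂| < δ → g s₁ < g s₂ + ε := by
    intro s₀ hs₀ ε hε
    have hK : IsCompact (Set.Icc (0:ℝ) (s₀+1)) := isCompact_Icc
    have hKsub : Set.Icc (0:ℝ) (s₀+1) ⊆ Set.Ici 0 := fun y hy => hy.1
    have hu : UniformContinuousOn φ (Set.Icc 0 (s₀+1)) :=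
      hK.uniformContinuousOn_of_continuous (hφ.mono hKsub)
    rw [Metric.uniformContinuousOn_iff] at hu
    obtain ⟨δ, hδ, hud⟩ := hu ε hε
    refine ⟨δ, hδ, ?_⟩
    intro s₁ s₂ h₁ h₂ hb₁ hb₂ hd
    obtain ⟨r₂, hr₂, hg₂, hmin₂⟩ := intervalInf_min φ hφ c hc hc1 s₂ h₂
    set r₁ : ℝ := max (min r₂ s₁) (c*s₁) with hr₁def
    have hcs₁ : c * s₁ ≤ s₁ := by nlinarith
    have hr₁mem : r₁ ∈ Set.Icc (c*s₁) s₁ :=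
      ⟨le_max_right _ _, max_le (min_le_right _ _) hcs₁⟩
    have hdist : |r₁ - r₂| ≤ |s₁ - s₂| := by
      rcases le_total r₂ s₁ with h | h
      · rcases le_total (c*s₁) r₂ with h' | h'
        · have : r₁ = r₂ := by rw [hr₁def, min_eq_left h, max_eq_left h']
          rw [this]; simp [abs_nonneg]
        · have hr₁eq : r₁ = c * s₁ := by
            rw [hr₁def, min_eq_left h, max_eq_right h']
          rw [hr₁eq]
          have h1 : c * s₂ ≤ r₂ := hr₂.1
          have h2 : 0 ≤ c*s₁ - r₂ := by linarith
          rw [abs_of_nonneg h2]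
          have : c*s₁ - r₂ ≤ c*(s₁ - s₂) := by nlinarith
          have h3 : c*(s₁-s₂) ≤ |s₁ - s₂| := by
            calc c*(s₁-s₂) ≤ c*|s₁-s₂| := by
                  exact mul_le_mul_of_nonneg_left (le_abs_self _) hc.le
              _ ≤ 1*|s₁-s₂| := mul_le_mul_of_nonneg_right hc1 (abs_nonneg _)
              _ = |s₁-s₂| := one_mul _
          linarith
      · have hr₁eq : r₁ = s₁ := by
          rw [hr₁def, min_eq_right h, max_eq_left hcs₁]
        rw [hr₁eq]
        have : |s₁ - r₂| = r₂ - s₁ := by rw [abs_sub_comm, abs_of_nonneg (by linarith)]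
        rw [this]
        have : r₂ - s₁ ≤ s₂ - s₁ := by linarith [hr₂.2]
        calc r₂ - s₁ ≤ s₂ - s₁ := this
          _ ≤ |s₂ - s₁| := le_abs_self _
          _ = |s₁ - s₂| := abs_sub_comm _ _
    have hr₁K : r₁ ∈ Set.Icc (0:ℝ) (s₀+1) :=
      ⟨le_trans (by positivity) hr₁mem.1, le_trans hr₁mem.2 hb₁⟩
    have hr₂K : r₂ ∈ Set.Icc (0:ℝ) (s₀+1) :=
      ⟨le_trans (by positivity) hr₂.1, le_trans hr₂.2 hb₂⟩
    have hfr : |φ r₁ - φ r₂| < ε := by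
      have := hud r₁ hr₁K r₂ hr₂K (by
        rw [Real.dist_eq]; exact lt_of_le_of_lt hdist hd)
      rwa [Real.dist_eq] at this
    have hgle : g s₁ ≤ φ r₁ := by
      have : φ r₁ ∈ φ '' Set.Icc (c*s₁) s₁ := ⟨r₁, hr₁mem, rfl⟩
      obtain ⟨r₁', hr₁', hg₁, hmin₁⟩ := intervalInf_min φ hφ c hc hc1 s₁ h₁
      have e : g s₁ = φ r₁' := hg₁
      rw [e]
      exact hmin₁ r₁ hr₁mem
    have : φ r₁ < φ r₂ + ε := by
      have := abs_sub_lt_iff.1 hfr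
      linarith [this.1]
    calc g s₁ ≤ φ r₁ := hgle
      _ < φ r₂ + ε := this
      _ = g s₂ + ε := by have e : g s₂ = φ r₂ := hg₂; rw [e]
  -- now continuity
  intro s₀ hs₀
  rw [Metric.continuousWithinAt_iff]
  intro ε hε
  obtain ⟨δ, hδ, hkey⟩ := key s₀ hs₀ ε hε
  refine ⟨min δ 1, lt_min hδ one_pos, ?_⟩
  intro s hs hd
  have hd' : |s - s₀| < δ := lt_of_lt_of_le (by rwa [Real.dist_eq] at hd) (min_le_left _ _)
  have hd1 : |s - s₀| < 1 := lt_of_lt_of_le (by rwa [Real.dist_eq] at hd) (min_le_right _ _)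
  have hb : s ≤ s₀ + 1 := by
    have := (abs_sub_lt_iff.1 hd1).1; linarith
  have hb₀ : s₀ ≤ s₀ + 1 := by linarith
  have l1 : g s < g s₀ + ε := hkey s s₀ hs hs₀ hb hb₀ hd'
  have l2 : g s₀ < g s + ε := hkey s₀ s hs₀ hs hb₀ hb (by rwa [abs_sub_comm])
  rw [Real.dist_eq, abs_sub_lt_iff]
  constructor <;> linarith
section aux2
variable (n : ℕ) [NeZero n]

lemma classP_nonneg (f : ℝ → ℝ) (h : IsClassP f) : ∀ s : ℝ, 0 ≤ s → 0 ≤ f s := by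
  intro s hs
  rcases eq_or_lt_of_le hs with h0 | h0
  · rw [← h0, h.2.1]
  · exact (h.2.2 s h0).le

lemma classK_isP (f : ℝ → ℝ) (h : IsClassK f) : IsClassP f :=
  ⟨h.1, h.2.2, fun s hs => by
    have := h.2.1 (Set.mem_Ici.2 (le_refl (0:ℝ))) (Set.mem_Ici.2 hs.le) hs
    rwa [h.2.2] at this⟩

lemma exists_big_coord (lam : Fin n → ℝ) (hlam_pos : ∀ j, 0 < lam j)
    (x : Fin n → ℝ) (hx : ∀ l, 0 ≤ x l) :
    ∃ j : Fin n, (n:ℝ)⁻¹ * (∑ i : Fin n, lam i * x i) ≤ lam j * x j ∧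
      lam j * x j ≤ ∑ i : Fin n, lam i * x i := by
  have hne : (Finset.univ : Finset (Fin n)).Nonempty := Finset.univ_nonempty
  have hn0 : (0:ℝ) < n := by
    have := Nat.pos_of_ne_zero (NeZero.ne n); exact_mod_cast this
  have hsum : ∑ _i : Fin n, (n:ℝ)⁻¹ * (∑ i : Fin n, lam i * x i)
      ≤ ∑ i : Fin n, lam i * x i := by
    rw [Finset.sum_const, Finset.card_univ, Fintype.card_fin, nsmul_eq_mul,
      ← mul_assoc, mul_inv_cancel₀ hn0.ne', one_mul]
  obtain ⟨j, _, hj⟩ := Finset.exists_le_of_sum_le hne hsum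
  refine ⟨j, hj, Finset.single_le_sum (fun i _ => mul_nonneg (hlam_pos i).le (hx i))
    (Finset.mem_univ j)⟩

lemma alphaK_exists (θ : Fin n → ℝ → ℝ) (hθK : ∀ i, IsClassK (θ i))
    (lam : Fin n → ℝ) (hlam_pos : ∀ j, 0 < lam j) :
    ∃ α : ℝ → ℝ, IsClassK α ∧
      ((∀ i, Tendsto (θ i) atTop atTop) → Tendsto α atTop atTop) ∧
      ∀ x : Fin n → ℝ, (∀ l, 0 ≤ x l) →
        α (∑ i : Fin n, lam i * x i) ≤ ∑ i : Fin n, lam i * θ i (x i) := by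
  have hne : (Finset.univ : Finset (Fin n)).Nonempty := Finset.univ_nonempty
  have hn0 : (0:ℝ) < n := by
    have := Nat.pos_of_ne_zero (NeZero.ne n); exact_mod_cast this
  set c : ℝ := (n : ℝ)⁻¹ with hc
  have hcpos : 0 < c := inv_pos.2 hn0
  refine ⟨fun s => Finset.univ.inf' hne (fun i => lam i * θ i (c * s / lam i)),
    ⟨?_, ?_, ?_⟩, ?_, ?_⟩
  · apply ContinuousOn.finset_inf'_apply hne
    intro i _
    apply continuousOn_const.mul
    refine ContinuousOn.comp (hθK i).1 ((continuousOn_const.mul continuousOn_id).div_const _)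
      (fun y hy => ?_)
    exact Set.mem_Ici.2 (div_nonneg (mul_nonneg hcpos.le hy) (hlam_pos i).le)
  · intro a ha b hb hab
    obtain ⟨i, _, hib⟩ := Finset.exists_mem_eq_inf' hne
      (fun i => lam i * θ i (c * b / lam i))
    have hlt : lam i * θ i (c * a / lam i) < lam i * θ i (c * b / lam i) := by
      apply mul_lt_mul_of_pos_left _ (hlam_pos i)
      apply (hθK i).2.1
      · exact Set.mem_Ici.2 (div_nonneg (mul_nonneg hcpos.le ha) (hlam_pos i).le)
      · exact Set.mem_Ici.2 (div_nonneg (mul_nonneg hcpos.le hb) (hlam_pos i).le)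
      · exact div_lt_div_of_pos_right (mul_lt_mul_of_pos_left hab hcpos) (hlam_pos i)
    calc Finset.univ.inf' hne (fun i => lam i * θ i (c * a / lam i))
        ≤ lam i * θ i (c * a / lam i) := Finset.inf'_le _ (Finset.mem_univ i)
      _ < lam i * θ i (c * b / lam i) := hlt
      _ = Finset.univ.inf' hne (fun i => lam i * θ i (c * b / lam i)) := hib.symm
  · have hall : ∀ i : Fin n, lam i * θ i (c * 0 / lam i) = 0 := fun i => by
      rw [mul_zero, zero_div, (hθK i).2.2, mul_zero]
    apply le_antisymm
    · exact (Finset.inf'_le _ (Finset.mem_univ hne.choose)).trans_eq (hall _)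
    · exact Finset.le_inf' _ _ (fun i _ => (hall i).ge)
  · intro hT
    rw [tendsto_atTop]
    intro b
    have h1 : ∀ i : Fin n, ∀ᶠ s in atTop, b ≤ lam i * θ i (c * s / lam i) := by
      intro i
      have hin : Tendsto (fun s : ℝ => c * s / lam i) atTop atTop :=
        Filter.Tendsto.atTop_div_const (hlam_pos i)
          (Filter.Tendsto.const_mul_atTop hcpos tendsto_id)
      have := Filter.Tendsto.const_mul_atTop (hlam_pos i) ((hT i).comp hin)
      exact this.eventually_ge_atTop b
    exact (eventually_all.2 h1).mono (fun s hs => Finset.le_inf' _ _ (fun i _ => hs i))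
  · intro x hx
    obtain ⟨j, hj1, hj2⟩ := exists_big_coord n lam hlam_pos x hx
    set s := ∑ i : Fin n, lam i * x i with hsdef
    have hs0 : 0 ≤ s := Finset.sum_nonneg fun i _ => mul_nonneg (hlam_pos i).le (hx i)
    have hxj : c * s / lam j ≤ x j := by
      rw [div_le_iff₀ (hlam_pos j)]
      calc c * s ≤ lam j * x j := hj1
        _ = x j * lam j := mul_comm _ _
    have hθm : θ j (c * s / lam j) ≤ θ j (x j) :=
      (hθK j).2.1.monotoneOn
        (Set.mem_Ici.2 (div_nonneg (mul_nonneg hcpos.le hs0) (hlam_pos j).le))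
        (Set.mem_Ici.2 (hx j)) hxj
    calc Finset.univ.inf' hne (fun i => lam i * θ i (c * s / lam i))
        ≤ lam j * θ j (c * s / lam j) := Finset.inf'_le _ (Finset.mem_univ j)
      _ ≤ lam j * θ j (x j) := mul_le_mul_of_nonneg_left hθm (hlam_pos j).le
      _ ≤ ∑ i : Fin n, lam i * θ i (x i) :=
          Finset.single_le_sum (fun i _ => mul_nonneg (hlam_pos i).le
            (classP_nonneg _ (classK_isP _ (hθK i)) _ (hx i))) (Finset.mem_univ j)
lemma sig_exists (κ : Fin n → ℝ → ℝ)
    (hκ : ∀ i, IsClassK (κ i) ∨ κ i = 0)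
    (lam : Fin n → ℝ) (hlam_pos : ∀ j, 0 < lam j) :
    ∃ sig : ℝ → ℝ, IsClassK sig ∧
      ∀ w : Fin n → ℝ, (∀ l, 0 ≤ w l) →
        ∑ i : Fin n, lam i * κ i (w i) ≤ sig (Real.sqrt (∑ i : Fin n, w i ^ 2)) := by
  have hκ_mono : ∀ i, MonotoneOn (κ i) (Set.Ici 0) := by
    intro i; rcases hκ i with h | h
    · exact h.2.1.monotoneOn
    · rw [h]; exact monotoneOn_const
  have hκ0 : ∀ i, κ i 0 = 0 := by
    intro i; rcases hκ i with h | h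
    · exact h.2.2
    · rw [h]; rfl
  have hκcont : ∀ i, ContinuousOn (κ i) (Set.Ici 0) := by
    intro i; rcases hκ i with h | h
    · exact h.1
    · rw [h]; exact continuousOn_const
  refine ⟨fun s => s + ∑ i : Fin n, lam i * κ i s, ⟨?_, ?_, ?_⟩, ?_⟩
  · exact (continuousOn_id).add (continuousOn_finset_sum _ fun i _ =>
      continuousOn_const.mul (hκcont i))
  · intro a ha b hb hab
    have : ∑ i : Fin n, lam i * κ i a ≤ ∑ i : Fin n, lam i * κ i b :=
      Finset.sum_le_sum fun i _ =>
        mul_le_mul_of_nonneg_left (hκ_mono i ha hb hab.le) (hlam_pos i).le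
    simpa using add_lt_add_of_lt_of_le hab this
  · simp [hκ0]
  · intro w hw
    set W := Real.sqrt (∑ i : Fin n, w i ^ 2) with hW
    have hW0 : 0 ≤ W := Real.sqrt_nonneg _
    have hwle : ∀ i, w i ≤ W := by
      intro i
      rw [hW, show w i = Real.sqrt ((w i)^2) from (Real.sqrt_sq (hw i)).symm]
      exact Real.sqrt_le_sqrt (Finset.single_le_sum (fun j _ => sq_nonneg (w j))
        (Finset.mem_univ i))
    have : ∑ i : Fin n, lam i * κ i (w i) ≤ ∑ i : Fin n, lam i * κ i W :=
      Finset.sum_le_sum fun i _ => mul_le_mul_of_nonneg_left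
        (hκ_mono i (Set.mem_Ici.2 (hw i)) (Set.mem_Ici.2 hW0) (hwle i)) (hlam_pos i).le
    show ∑ i : Fin n, lam i * κ i (w i) ≤ W + ∑ i : Fin n, lam i * κ i W
    linarith

end aux2
lemma alphaP_exists (n : ℕ) [NeZero n] (θ : Fin n → ℝ → ℝ) (hθP : ∀ i, IsClassP (θ i))
    (lam : Fin n → ℝ) (hlam_pos : ∀ j, 0 < lam j) :
    ∃ α : ℝ → ℝ, IsClassP α ∧
      ∀ x : Fin n → ℝ, (∀ l, 0 ≤ x l) →
        α (∑ i : Fin n, lam i * x i) ≤ ∑ i : Fin n, lam i * θ i (x i) := by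
  have hne : (Finset.univ : Finset (Fin n)).Nonempty := Finset.univ_nonempty
  have hn0 : (0:ℝ) < n := by
    have := Nat.pos_of_ne_zero (NeZero.ne n); exact_mod_cast this
  set c : ℝ := (n : ℝ)⁻¹ with hc
  have hcpos : 0 < c := inv_pos.2 hn0
  have hc1 : c ≤ 1 := by
    rw [hc]
    have : (1:ℝ) ≤ n := by exact_mod_cast Nat.one_le_iff_ne_zero.2 (NeZero.ne n)
    rw [inv_le_one_iff₀]; right; exact this
  set φ : ℝ → ℝ := fun y => Finset.univ.inf' hne (fun i => lam i * θ i (y / lam i)) with hφdef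
  have hφcont : ContinuousOn φ (Set.Ici 0) := by
    apply ContinuousOn.finset_inf'_apply hne
    intro i _
    apply continuousOn_const.mul
    exact ContinuousOn.comp (hθP i).1 (continuousOn_id.div_const _)
      (fun y hy => Set.mem_Ici.2 (div_nonneg hy (hlam_pos i).le))
  have hφ0 : φ 0 = 0 := by
    have hall : ∀ i : Fin n, lam i * θ i (0 / lam i) = 0 := fun i => by
      rw [zero_div, (hθP i).2.1, mul_zero]
    apply le_antisymm
    · exact (Finset.inf'_le _ (Finset.mem_univ hne.choose)).trans_eq (hall _)
    · exact Finset.le_inf' _ _ (fun i _ => (hall i).ge)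
  have hφpos : ∀ y : ℝ, 0 < y → 0 < φ y := by
    intro y hy
    rw [hφdef, Finset.lt_inf'_iff]
    intro i _
    exact mul_pos (hlam_pos i) ((hθP i).2.2 _ (div_pos hy (hlam_pos i)))
  have hφnonneg : ∀ y : ℝ, 0 ≤ y → 0 ≤ φ y := by
    intro y hy
    rcases eq_or_lt_of_le hy with h0 | h0
    · rw [← h0, hφ0]
    · exact (hφpos y h0).le
  have hφle : ∀ (y : ℝ) (j : Fin n), φ y ≤ lam j * θ j (y / lam j) :=
    fun y j => Finset.inf'_le _ (Finset.mem_univ j)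
  refine ⟨fun s => sInf (φ '' Set.Icc (c*s) s), ⟨?_, ?_, ?_⟩, ?_⟩
  · exact intervalInf_continuousOn φ hφcont c hcpos hc1
  · show sInf (φ '' Set.Icc (c*0) 0) = 0
    rw [mul_zero, Set.Icc_self, Set.image_singleton, csInf_singleton, hφ0]
  · intro s hs
    obtain ⟨r, hr, heq, _⟩ := intervalInf_min φ hφcont c hcpos hc1 s hs.le
    show 0 < sInf (φ '' Set.Icc (c*s) s)
    rw [heq]
    exact hφpos r (lt_of_lt_of_le (mul_pos hcpos hs) hr.1)
  · intro x hx
    show sInf (φ '' Set.Icc (c * ∑ i : Fin n, lam i * x i) (∑ i : Fin n, lam i * x i))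
      ≤ ∑ i : Fin n, lam i * θ i (x i)
    obtain ⟨j, hj1, hj2⟩ := exists_big_coord n lam hlam_pos x hx
    set s := ∑ i : Fin n, lam i * x i with hsdef
    have hs0 : 0 ≤ s := Finset.sum_nonneg fun i _ => mul_nonneg (hlam_pos i).le (hx i)
    have hmem : lam j * x j ∈ Set.Icc (c*s) s := ⟨hj1, hj2⟩
    have h1 : sInf (φ '' Set.Icc (c*s) s) ≤ φ (lam j * x j) := by
      apply csInf_le
      · refine ⟨0, fun b hb => ?_⟩
        obtain ⟨y, hy, rfl⟩ := hb
        exact hφnonneg y (le_trans (mul_nonneg hcpos.le hs0) hy.1)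
      · exact ⟨lam j * x j, hmem, rfl⟩
    have h2 : φ (lam j * x j) ≤ lam j * θ j (x j) := by
      have := hφle (lam j * x j) j
      rwa [mul_div_cancel_left₀ _ (hlam_pos j).ne'] at this
    have h3 : lam j * θ j (x j) ≤ ∑ i : Fin n, lam i * θ i (x i) :=
      Finset.single_le_sum (fun i _ => mul_nonneg (hlam_pos i).le
        (classP_nonneg _ (hθP i) _ (hx i))) (Finset.mem_univ j)
    linarith

end helper

/-- Under the cyclic small-gain conditions, V(x) = Σ λᵢ xᵢ is an iISS
Lyapunov function for the balancing network: Σ λᵢ fᵢ(x,w) ≤ -α(V(x)) + σ(|w|) with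
α of class P and σ of class K; α can be taken of class K (resp. K∞) when every θᵢ is
of class K (resp. K∞). -/


theorem balancing_network_iISS_lyapunov
    (n : ℕ) [NeZero n] (hn : 2 ≤ n)
    (η σ : Fin n → Fin n → (Fin n → ℝ) → ℝ)
    (hη_lip : ∀ i j : Fin n, LocallyLipschitz (η i j))
    (hσ_lip : ∀ i j : Fin n, LocallyLipschitz (σ i j))
    (hησ_nonneg : ∀ i j : Fin n, (j = i - 1 ∨ j = i + 1) →
      ∀ x : Fin n → ℝ, (∀ l, 0 ≤ x l) → 0 ≤ η i j x ∧ 0 ≤ σ i j x)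
    (hη_zero : ∀ i : Fin n, ∀ x : Fin n → ℝ, (∀ l, 0 ≤ x l) → x i = 0 →
      η (i - 1) i x = 0 ∧ η (i + 1) i x = 0)
    (θ : Fin n → ℝ → ℝ)
    (hθ : ∀ i, IsClassP (θ i) ∧ LocallyLipschitz (θ i))
    (κ : Fin n → ℝ → ℝ)
    (hκ : ∀ i, IsClassK (κ i) ∨ κ i = 0)
    (ℓ : Fin n → Fin n → ℝ)
    (hℓ_pos : ∀ i j : Fin n, (j = i - 1 ∨ j = i + 1) → 0 < ℓ i j)
    (hbound : ∀ i j : Fin n, (j = i - 1 ∨ j = i + 1) →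
      ∀ x : Fin n → ℝ, (∀ l, 0 ≤ x l) → σ i j x ≤ ℓ i j * η i j x)
    (hsg_cycle1 : ∀ i : Fin n, ℓ i (i + 1) * ℓ (i + 1) i ≤ 1)
    (k : Fin n)
    (hsg_cyclen_lo : ℓ k (k + 1) * ℓ (k + 1) k ≤ ∏ i : Fin n, ℓ i (i + 1) / ℓ (i + 1) i)
    (hsg_cyclen_hi : ∏ i : Fin n, ℓ i (i + 1) / ℓ (i + 1) i ≤
      1 / (ℓ k (k + 1) * ℓ (k + 1) k))
    (lam : Fin n → ℝ)
    (hlam : ∀ m : ℕ, m < n →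
      lam (k + 1 + (m : Fin n)) =
        ∏ t ∈ Finset.range m,
          Real.sqrt (ℓ (k + 1 + (t : Fin n)) (k + 1 + (t : Fin n) + 1) /
            ℓ (k + 1 + (t : Fin n) + 1) (k + 1 + (t : Fin n)))) :
    (∃ α sig : ℝ → ℝ, IsClassP α ∧ IsClassK sig ∧
      ∀ x w : Fin n → ℝ, (∀ l, 0 ≤ x l) → (∀ l, 0 ≤ w l) →
        ∑ i : Fin n, lam i * netRHS n η σ θ κ x w i ≤
          -α (∑ i : Fin n, lam i * x i) + sig (Real.sqrt (∑ i : Fin n, w i ^ 2))) ∧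
    ((∀ i, IsClassK (θ i)) →
      ∃ α sig : ℝ → ℝ, IsClassK α ∧ IsClassK sig ∧
        ∀ x w : Fin n → ℝ, (∀ l, 0 ≤ x l) → (∀ l, 0 ≤ w l) →
          ∑ i : Fin n, lam i * netRHS n η σ θ κ x w i ≤
            -α (∑ i : Fin n, lam i * x i) + sig (Real.sqrt (∑ i : Fin n, w i ^ 2))) ∧
    ((∀ i, IsClassKInfty (θ i)) →
      ∃ α sig : ℝ → ℝ, IsClassKInfty α ∧ IsClassK sig ∧
        ∀ x w : Fin n → ℝ, (∀ l, 0 ≤ x l) → (∀ l, 0 ≤ w l) →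
          ∑ i : Fin n, lam i * netRHS n η σ θ κ x w i ≤
            -α (∑ i : Fin n, lam i * x i) + sig (Real.sqrt (∑ i : Fin n, w i ^ 2))) := by
  have hedges := lam_edges n ℓ hℓ_pos hsg_cycle1 k hsg_cyclen_lo hsg_cyclen_hi lam hlam
  have hlam_pos : ∀ j, 0 < lam j := fun j => (hedges j).1
  have hθP : ∀ i, IsClassP (θ i) := fun i => (hθ i).1
  obtain ⟨sig, hsigK, hsig_bound⟩ := sig_exists n κ hκ lam hlam_pos
  have master : ∀ α : ℝ → ℝ,
      (∀ x : Fin n → ℝ, (∀ l, 0 ≤ x l) →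
        α (∑ i : Fin n, lam i * x i) ≤ ∑ i : Fin n, lam i * θ i (x i)) →
      ∀ x w : Fin n → ℝ, (∀ l, 0 ≤ x l) → (∀ l, 0 ≤ w l) →
        ∑ i : Fin n, lam i * netRHS n η σ θ κ x w i ≤
          -α (∑ i : Fin n, lam i * x i) + sig (Real.sqrt (∑ i : Fin n, w i ^ 2)) := by
    intro α hα x w hx hw
    have hsplit : ∀ i : Fin n, lam i * netRHS n η σ θ κ x w i
        = lam i * (-η (i-1) i x + σ i (i-1) x - η (i+1) i x + σ i (i+1) x)
          + (-(lam i * θ i (x i)) + lam i * κ i (w i)) := by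
      intro i; simp only [netRHS]; ring
    rw [Finset.sum_congr rfl (fun i _ => hsplit i), Finset.sum_add_distrib]
    have h1 := coupling_sum n η σ hησ_nonneg ℓ hbound lam hedges x hx
    have h2 := hα x hx
    have h3 := hsig_bound w hw
    have h4 : ∑ i : Fin n, (-(lam i * θ i (x i)) + lam i * κ i (w i))
        = -(∑ i : Fin n, lam i * θ i (x i)) + ∑ i : Fin n, lam i * κ i (w i) := by
      rw [Finset.sum_add_distrib, Finset.sum_neg_distrib]
    rw [h4]
    linarith
  refine ⟨?_, ?_, ?_⟩
  · obtain ⟨α, hαP, hαb⟩ := alphaP_exists n θ hθP lam hlam_pos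
    exact ⟨α, sig, hαP, hsigK, master α hαb⟩
  · intro hθK
    obtain ⟨α, hαK, _, hαb⟩ := alphaK_exists n θ hθK lam hlam_pos
    exact ⟨α, sig, hαK, hsigK, master α hαb⟩
  · intro hθinf
    obtain ⟨α, hαK, hαT, hαb⟩ := alphaK_exists n θ (fun i => (hθinf i).1) lam hlam_pos
    exact ⟨α, sig, ⟨hαK, hαT (fun i => (hθinf i).2)⟩, hsigK, master α hαb⟩
end

section
/- Let α and σ be class K functions, let w : [0,∞) → [0,∞) be measurable and locally essentially bounded, and let v : [0,∞) → [0,∞) be a differentiable function satisfying v'(t) ≤ −α(v(t)) + σ(w(t)) for almost all t ≥ 0. Suppose H > 0 is such that sup_{t≥0} σ(w(t)) < α(H). Then there exist T ≥ 0 and ε ∈ (0,H) such that v(t) ≤ H − ε for all t ≥ T. -/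
open MeasureTheory Set Filter

/-- If `f` is differentiable on `[a,b]` and `deriv f ≤ M` a.e. on `[a,b]`, then
`f b - f a ≤ M * (b - a)`. -/
lemma deriv_le_bound_sub {f : ℝ → ℝ} {a b M : ℝ} (hab : a ≤ b)
    (hdiff : ∀ x ∈ Set.Icc a b, DifferentiableAt ℝ f x)
    (hM : ∀ᵐ t ∂(volume.restrict (Set.Icc a b)), deriv f t ≤ M) :
    f b - f a ≤ M * (b - a) := by
  set φ : ℝ → ℝ := fun t => max (deriv f t) M with hφ
  have hae : φ =ᵐ[volume.restrict (Set.Icc a b)] fun _ => M :=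
    hM.mono fun t ht => max_eq_right ht
  have hint : IntegrableOn φ (Set.Icc a b) volume :=
    (integrableOn_const measure_Icc_lt_top.ne).congr hae.symm
  have hcont : ContinuousOn f (Set.Icc a b) := fun x hx =>
    (hdiff x hx).continuousAt.continuousWithinAt
  have h1 : f b - f a ≤ ∫ y in a..b, φ y := by
    apply intervalIntegral.sub_le_integral_of_hasDeriv_right_of_le hab hcont
      (fun x hx => ((hdiff x (Set.Ioo_subset_Icc_self hx)).hasDerivAt).hasDerivWithinAt) hint
      (fun x hx => le_max_left _ _)
  have h2 : (∫ y in a..b, φ y) = ∫ y in a..b, (M:ℝ) := by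
    apply intervalIntegral.integral_congr_ae
    have := (ae_restrict_iff' measurableSet_Icc).mp hae
    filter_upwards [this] with x hx hx2
    exact hx (Set.Ioc_subset_Icc_self ((Set.uIoc_of_le hab) ▸ hx2))
  calc f b - f a ≤ ∫ y in a..b, φ y := h1
    _ = ∫ y in a..b, (M:ℝ) := h2
    _ = M * (b - a) := by rw [intervalIntegral.integral_const, smul_eq_mul]; ring

/-- Ultimate-bound property: if v' ≤ -α(v) + σ(w) almost everywhere on
[0,∞) with class K functions α, σ and sup_{t≥0} σ(w(t)) < α(H), then v is eventually
bounded by H - ε for some ε ∈ (0,H). -/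
theorem ultimate_bound_of_dissipation
    (α σ : ℝ → ℝ) (hα : IsClassK α) (hσ : IsClassK σ)
    (w : ℝ → ℝ) (hw_meas : Measurable w)
    (hw_nonneg : ∀ t ≥ (0:ℝ), 0 ≤ w t)
    (hw_locbdd : ∀ T : ℝ, ∃ C : ℝ,
      ∀ᵐ t ∂(MeasureTheory.volume.restrict (Set.Icc (0:ℝ) T)), |w t| ≤ C)
    (v : ℝ → ℝ) (hv_nonneg : ∀ t ≥ (0:ℝ), 0 ≤ v t)
    (hv_diff : ∀ t ≥ (0:ℝ), DifferentiableAt ℝ v t)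
    (hineq : ∀ᵐ t ∂(MeasureTheory.volume.restrict (Set.Ici (0:ℝ))),
      deriv v t ≤ -α (v t) + σ (w t))
    (H : ℝ) (hH : 0 < H)
    (hsmall : ∃ c : ℝ, c < α H ∧ ∀ t ≥ (0:ℝ), σ (w t) ≤ c) :
    ∃ T ≥ (0:ℝ), ∃ ε : ℝ, 0 < ε ∧ ε < H ∧ ∀ t ≥ T, v t ≤ H - ε := by
  obtain ⟨c, hc, hcw⟩ := hsmall
  -- choose ε with α (H - ε) > c
  have hconA : ContinuousAt α H := (hα.1 H hH.le).continuousAt (Ici_mem_nhds hH)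
  have hev : ∀ᶠ x in nhds H, c < α x := hconA.eventually (eventually_gt_nhds hc)
  obtain ⟨δ, hδ, hball⟩ := Metric.eventually_nhds_iff.mp hev
  set ε := min (δ/2) (H/2) with hεdef
  have hε0 : 0 < ε := lt_min (by linarith) (by linarith)
  have hεH : ε < H := lt_of_le_of_lt (min_le_right _ _) (by linarith)
  have hHε : 0 < H - ε := by linarith
  have hαHε : c < α (H - ε) := by
    apply hball
    rw [Real.dist_eq]
    have h1 : ε ≤ δ / 2 := min_le_left _ _
    have : |H - ε - H| = ε := by rw [show H - ε - H = -ε by ring, abs_neg, abs_of_pos hε0]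
    rw [this]; linarith
  set d := α (H - ε) - c with hddef
  have hd : 0 < d := by simp [hddef]; linarith
  -- key decay estimate
  have key : ∀ s t : ℝ, 0 ≤ s → s ≤ t → (∀ x ∈ Set.Icc s t, H - ε ≤ v x) →
      v t ≤ v s - d * (t - s) := by
    intro s t hs hst hge
    have hM : ∀ᵐ x ∂(volume.restrict (Set.Icc s t)), deriv v x ≤ -d := by
      have hsub : Set.Icc s t ⊆ Set.Ici (0:ℝ) := fun x hx => le_trans hs hx.1
      have h1 := ae_restrict_of_ae_restrict_of_subset hsub hineq
      have h2 : ∀ᵐ x ∂(volume.restrict (Set.Icc s t)), x ∈ Set.Icc s t :=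
        ae_restrict_mem measurableSet_Icc
      filter_upwards [h1, h2] with x hx hmem
      have hx0 : (0:ℝ) ≤ x := le_trans hs hmem.1
      have hαmono : α (H - ε) ≤ α (v x) :=
        hα.2.1.monotoneOn hHε.le (hv_nonneg x hx0) (hge x hmem)
      have hσle : σ (w x) ≤ c := hcw x hx0
      linarith
    have := deriv_le_bound_sub hst (fun x hx => hv_diff x (le_trans hs hx.1)) hM
    linarith [this]
  -- Step 1: there is t0 with v t0 ≤ H - ε
  have hex : ∃ t0 ≥ (0:ℝ), v t0 ≤ H - ε := by
    by_contra h
    push_neg at h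
    have hv0 : 0 ≤ v 0 := hv_nonneg 0 le_rfl
    set T := v 0 / d + 1 with hTdef
    have hT0 : (0:ℝ) ≤ T := by positivity
    have hK := key 0 T le_rfl hT0 (fun x hx => (h x hx.1).le)
    have hdT : d * T = v 0 + d := by
      rw [hTdef, mul_add, mul_one, mul_div_cancel₀ _ hd.ne']
    have hvT := h T hT0
    linarith
  obtain ⟨t0, ht0, hvt0⟩ := hex
  refine ⟨t0, ht0, ε, hε0, hεH, ?_⟩
  intro t ht
  by_contra hcon
  push_neg at hcon
  have htt0 : t0 < t := lt_of_le_of_ne ht (by rintro rfl; linarith)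
  set S := Set.Icc t0 t ∩ v ⁻¹' (Set.Iic (H - ε)) with hSdef
  have hSne : S.Nonempty := ⟨t0, ⟨le_rfl, htt0.le⟩, hvt0⟩
  have hSbdd : BddAbove S := ⟨t, fun x hx => hx.1.2⟩
  have hvcont : ContinuousOn v (Set.Icc t0 t) := fun x hx =>
    (hv_diff x (le_trans ht0 hx.1)).continuousAt.continuousWithinAt
  have hSclosed : IsClosed S :=
    hvcont.preimage_isClosed_of_isClosed isClosed_Icc isClosed_Iic
  obtain ⟨s, hsS, hsub⟩ : ∃ s, s ∈ S ∧ ∀ x ∈ S, x ≤ s :=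
    ⟨sSup S, hSclosed.csSup_mem hSne hSbdd, fun x hx => le_csSup hSbdd hx⟩
  have hst : s < t := lt_of_le_of_ne hsS.1.2 (by
    rintro rfl
    exact absurd hsS.2 (not_le.mpr hcon))
  have hgt : ∀ x, s < x → x ≤ t → H - ε < v x := by
    intro x hx1 hx2
    by_contra hv
    push_neg at hv
    have hxS : x ∈ S := ⟨⟨le_trans hsS.1.1 hx1.le, hx2⟩, hv⟩
    exact absurd (hsub x hxS) (not_le.mpr hx1)
  have hvs_ge : H - ε ≤ v s := by
    have hc1 : ContinuousAt v s := (hv_diff s (le_trans ht0 hsS.1.1)).continuousAt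
    have htend : Tendsto v (nhdsWithin s (Set.Ioi s)) (nhds (v s)) :=
      hc1.continuousWithinAt.tendsto
    apply ge_of_tendsto htend
    filter_upwards [Ioo_mem_nhdsGT_of_mem (Set.mem_Ico.mpr ⟨le_rfl, hst⟩)] with x hx
    exact (hgt x hx.1 hx.2.le).le
  have hK := key s t (le_trans ht0 hsS.1.1) hst.le (fun x hx => by
    rcases eq_or_lt_of_le hx.1 with rfl | hlt
    · exact hvs_ge
    · exact (hgt x hlt hx.2).le)
  have hms : 0 < d * (t - s) := mul_pos hd (by linarith)
  have hvsle : v s ≤ H - ε := hsS.2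
  linarith
end

section
/- Let β, γ, μ > 0 and let S, I : [0,∞) → [0,∞) be differentiable nonnegative functions with I'(t) = β I(t) S(t) − γ I(t) − μ I(t) for all t ≥ 0. Then the function V_I(t) := log(1 + I(t)) satisfies V_I'(t) ≤ −(γ+μ) I(t)/(1 + I(t)) + β S(t) for all t ≥ 0. -/
/-- The I-subsystem of the SIR model admits V_I = log(1+I) as an iISS
Lyapunov function with respect to the input S. -/
theorem sir_I_subsystem_iISS_lyapunov
    (β γ μ : ℝ) (hβ : 0 < β) (hγ : 0 < γ) (hμ : 0 < μ)
    (S I : ℝ → ℝ)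
    (hS_nonneg : ∀ t ≥ (0:ℝ), 0 ≤ S t)
    (hI_nonneg : ∀ t ≥ (0:ℝ), 0 ≤ I t)
    (hI : ∀ t ≥ (0:ℝ), HasDerivAt I (β * I t * S t - γ * I t - μ * I t) t) :
    ∀ t ≥ (0:ℝ),
      deriv (fun s => Real.log (1 + I s)) t ≤
        -((γ + μ) * I t / (1 + I t)) + β * S t := by
  intro t ht
  have hInn := hI_nonneg t ht
  have hSnn := hS_nonneg t ht
  have hpos : (0:ℝ) < 1 + I t := by linarith
  have hd : HasDerivAt (fun s => Real.log (1 + I s))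
      ((β * I t * S t - γ * I t - μ * I t) / (1 + I t)) t := by
    have h1 : HasDerivAt (fun s => 1 + I s) (β * I t * S t - γ * I t - μ * I t) t :=
      (hI t ht).const_add 1
    simpa [Function.comp_def, div_eq_inv_mul] using (Real.hasDerivAt_log (ne_of_gt hpos)).comp t h1
  rw [hd.deriv]
  have key : (β * I t * S t - γ * I t - μ * I t) / (1 + I t)
      = -((γ + μ) * I t / (1 + I t)) + β * S t * (I t / (1 + I t)) := by
    field_simp
    ring
  rw [key]
  have hfrac : I t / (1 + I t) ≤ 1 := by
    rw [div_le_one hpos]; linarith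
  have : β * S t * (I t / (1 + I t)) ≤ β * S t * 1 := by
    apply mul_le_mul_of_nonneg_left hfrac (by positivity)
  linarith
end

section
/- Let β, γ, μ > 0 and set H := (γ+μ)/β. Let S, I, R : [0,∞) → [0,∞) be differentiable nonnegative functions satisfying the SIR model S' = B − μS − βIS, I' = βIS − γI − μI, R' = γI − μR for all t ≥ 0, where B : [0,∞) → [0,∞) is measurable and satisfies sup_{t≥0} B(t) < μH. Then lim_{t→∞} I(t) = 0 and lim_{t→∞} R(t) = 0. -/
open Real Filter Set

lemma exp_decay_tendsto (C k a : ℝ) (hk : 0 < k) :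
    Tendsto (fun t => C * Real.exp (-k * (t - a))) atTop (nhds 0) := by
  have h2 : Tendsto (fun t : ℝ => t - a) atTop atTop :=
    tendsto_atTop_add_const_right _ _ tendsto_id
  have h3 : Tendsto (fun t : ℝ => k * (t - a)) atTop atTop := h2.const_mul_atTop hk
  have h1 : Tendsto (fun t : ℝ => -k * (t - a)) atTop atBot := by
    have h := tendsto_neg_atTop_atBot.comp h3
    have he : (fun t : ℝ => -k * (t - a)) = (Neg.neg ∘ fun t => k * (t - a)) := by
      funext t; simp only [Function.comp]; ring
    rw [he]; exact h
  have h4 : Tendsto (fun t => Real.exp (-k * (t - a))) atTop (nhds 0) :=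
    Real.tendsto_exp_atBot.comp h1
  simpa using h4.const_mul C

lemma decay_bound (μ k a : ℝ) (hμ : 0 < μ) (f f' : ℝ → ℝ)
    (hf : ∀ t ≥ a, HasDerivAt f (f' t) t)
    (hle : ∀ t ≥ a, f' t ≤ k - μ * f t) :
    ∀ t ≥ a, f t ≤ (f a - k / μ) * Real.exp (-μ * (t - a)) + k / μ := by
  set g : ℝ → ℝ := fun t => (f t - k / μ) * Real.exp (μ * t) with hgdef
  have hg' : ∀ t ≥ a, HasDerivAt g ((f' t + μ * f t - k) * Real.exp (μ * t)) t := by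
    intro t ht
    have h1 : HasDerivAt (fun t => f t - k / μ) (f' t) t := (hf t ht).sub_const _
    have h2 : HasDerivAt (fun t : ℝ => Real.exp (μ * t)) (μ * Real.exp (μ * t)) t := by
      have h := (Real.hasDerivAt_exp (μ * t)).comp t ((hasDerivAt_id t).const_mul μ)
      exact h.congr_deriv (by ring)
    have h3 := h1.mul h2
    have : μ ≠ 0 := ne_of_gt hμ
    exact h3.congr_deriv (by linear_combination (-Real.exp (μ * t)) * div_mul_cancel₀ k this)
  have mono : AntitoneOn g (Set.Ici a) := by
    apply antitoneOn_of_deriv_nonpos (convex_Ici a)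
    · intro t ht
      exact (hg' t ht).continuousAt.continuousWithinAt
    · intro t ht
      rw [interior_Ici] at ht
      exact (hg' t ht.le).differentiableAt.differentiableWithinAt
    · intro t ht
      rw [interior_Ici] at ht
      rw [(hg' t ht.le).deriv]
      have h := hle t ht.le
      nlinarith [Real.exp_pos (μ * t)]
  intro t ht
  have hgt : g t ≤ g a := mono Set.self_mem_Ici ht ht
  have hE : Real.exp (μ * a) = Real.exp (-μ * (t - a)) * Real.exp (μ * t) := by
    rw [← Real.exp_add]; ring_nf
  have hEt : (0:ℝ) < Real.exp (μ * t) := Real.exp_pos _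
  rw [hgdef] at hgt
  simp only at hgt
  rw [hE] at hgt
  have := (mul_le_mul_iff_of_pos_right hEt).mp (by linarith [hgt] : (f t - k / μ) * Real.exp (μ * t) ≤ ((f a - k / μ) * Real.exp (-μ * (t - a))) * Real.exp (μ * t))
  linarith

/-- In the SIR model, if the newborn/immigration rate satisfies
sup_{t≥0} B(t) < μH with H = (γ+μ)/β, then the infected and recovered populations
converge to zero. -/
theorem sir_disease_eradication
    (β γ μ : ℝ) (hβ : 0 < β) (hγ : 0 < γ) (hμ : 0 < μ)
    (B : ℝ → ℝ) (hB_meas : Measurable B) (hB_nonneg : ∀ t ≥ (0:ℝ), 0 ≤ B t)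
    (hB_small : ∃ c : ℝ, c < μ * ((γ + μ) / β) ∧ ∀ t ≥ (0:ℝ), B t ≤ c)
    (S I R : ℝ → ℝ)
    (hS_nonneg : ∀ t ≥ (0:ℝ), 0 ≤ S t)
    (hI_nonneg : ∀ t ≥ (0:ℝ), 0 ≤ I t)
    (hR_nonneg : ∀ t ≥ (0:ℝ), 0 ≤ R t)
    (hS : ∀ t ≥ (0:ℝ), HasDerivAt S (B t - μ * S t - β * I t * S t) t)
    (hI : ∀ t ≥ (0:ℝ), HasDerivAt I (β * I t * S t - γ * I t - μ * I t) t)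
    (hR : ∀ t ≥ (0:ℝ), HasDerivAt R (γ * I t - μ * R t) t) :
    Filter.Tendsto I Filter.atTop (nhds 0) ∧
      Filter.Tendsto R Filter.atTop (nhds 0) := by
  obtain ⟨c, hc, hBc⟩ := hB_small
  set Hc : ℝ := (γ + μ) / β with hHc
  have hβH : β * Hc = γ + μ := by rw [hHc]; field_simp
  have hcμ : c / μ < Hc := by
    rw [div_lt_iff₀ hμ]; linarith [hc]
  set δ : ℝ := (Hc - c / μ) / 2 with hδdef
  have hδ : 0 < δ := by rw [hδdef]; linarith
  -- Step 1: bound on N = S + I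
  set N : ℝ → ℝ := fun t => S t + I t with hNdef
  have hN' : ∀ t ≥ (0:ℝ), HasDerivAt N (B t - μ * N t - γ * I t) t := by
    intro t ht
    have h := (hS t ht).add (hI t ht)
    exact h.congr_deriv (by simp only [hNdef]; ring)
  have hNle : ∀ t ≥ (0:ℝ), B t - μ * N t - γ * I t ≤ c - μ * N t := by
    intro t ht
    have h1 := hBc t ht
    have h2 := hI_nonneg t ht
    nlinarith
  have hNbound := decay_bound μ c 0 hμ N _ hN' hNle
  have h2 : ∀ᶠ t in atTop, (N 0 - c / μ) * Real.exp (-μ * (t - 0)) < δ :=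
    (exp_decay_tendsto (N 0 - c / μ) μ 0 hμ).eventually (gt_mem_nhds hδ)
  obtain ⟨T0, hT0⟩ := eventually_atTop.mp h2
  set a : ℝ := max T0 0 with hadef
  have ha0 : (0:ℝ) ≤ a := le_max_right _ _
  have hSle : ∀ t ≥ a, S t ≤ Hc - δ := by
    intro t ht
    have ht0 : (0:ℝ) ≤ t := ha0.trans ht
    have hb := hNbound t ht0
    have he := hT0 t ((le_max_left _ _).trans ht)
    have hi := hI_nonneg t ht0
    have hSN : S t ≤ N t := by simp only [hNdef]; linarith
    have hcδ : c / μ + δ = Hc - δ := by rw [hδdef]; ring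
    linarith
  -- Step 2: I decays
  set lam : ℝ := β * δ with hlamdef
  have hlam0 : 0 < lam := mul_pos hβ hδ
  have hIle : ∀ t ≥ a, β * I t * S t - γ * I t - μ * I t ≤ 0 - lam * I t := by
    intro t ht
    have ht0 : (0:ℝ) ≤ t := ha0.trans ht
    have hi := hI_nonneg t ht0
    have hs := hSle t ht
    have key : β * I t * S t ≤ β * I t * (Hc - δ) :=
      mul_le_mul_of_nonneg_left hs (mul_nonneg hβ.le hi)
    nlinarith
  have hIb := decay_bound lam 0 a hlam0 I _ (fun t ht => hI t (ha0.trans ht)) hIle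
  have hItend : Tendsto I atTop (nhds 0) := by
    apply squeeze_zero' (g := fun t => (I a - 0 / lam) * Real.exp (-lam * (t - a)) + 0 / lam)
      (eventually_atTop.mpr ⟨0, fun t ht => hI_nonneg t ht⟩)
      (eventually_atTop.mpr ⟨a, hIb⟩)
    have := exp_decay_tendsto (I a - 0 / lam) lam a hlam0
    simpa [zero_div] using this
  refine ⟨hItend, ?_⟩
  -- Step 3: R decays
  rw [Metric.tendsto_atTop]
  intro ε hε
  have hε2 : 0 < μ * ε / (2 * γ) := by positivity
  have h3 : ∀ᶠ t in atTop, I t < μ * ε / (2 * γ) := hItend.eventually (gt_mem_nhds hε2)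
  obtain ⟨T1, hT1⟩ := eventually_atTop.mp h3
  set b : ℝ := max T1 0 with hbdef
  have hb0 : (0:ℝ) ≤ b := le_max_right _ _
  have hRle : ∀ t ≥ b, γ * I t - μ * R t ≤ μ * ε / 2 - μ * R t := by
    intro t ht
    have hIt := (hT1 t ((le_max_left _ _).trans ht)).le
    have h4 : γ * I t ≤ γ * (μ * ε / (2 * γ)) := mul_le_mul_of_nonneg_left hIt hγ.le
    have h5 : γ * (μ * ε / (2 * γ)) = μ * ε / 2 := by field_simp
    linarith
  have hRb := decay_bound μ (μ * ε / 2) b hμ R _ (fun t ht => hR t (hb0.trans ht)) hRle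
  have hμe : (μ * ε / 2) / μ = ε / 2 := by field_simp
  have h6 : ∀ᶠ t in atTop, (R b - (μ * ε / 2) / μ) * Real.exp (-μ * (t - b)) < ε / 2 :=
    (exp_decay_tendsto _ μ b hμ).eventually (gt_mem_nhds (by positivity))
  obtain ⟨T2, hT2⟩ := eventually_atTop.mp h6
  refine ⟨max b T2, fun t ht => ?_⟩
  have htb : b ≤ t := (le_max_left _ _).trans ht
  have hRt := hRb t htb
  have hTt := hT2 t ((le_max_right _ _).trans ht)
  have hRnn := hR_nonneg t (hb0.trans htb)
  rw [Real.dist_eq, sub_zero, abs_of_nonneg hRnn]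
  rw [hμe] at hRt hTt
  linarith
end

section
/- Let β, γ, ε, μ > 0 and let S, E, I : [0,∞) → [0,∞) be differentiable nonnegative functions with E'(t) = β I(t) S(t) − (ε+μ) E(t) and I'(t) = ε E(t) − (γ+μ) I(t) for all t ≥ 0. Then the function V_{EI}(t) := log(1 + E(t) + I(t)) satisfies V_{EI}'(t) ≤ −μ (E(t) + I(t))/(1 + E(t) + I(t)) + β S(t) for all t ≥ 0. -/
/-- The EI-subsystem of the SEIS model admits V_EI = log(1+E+I) as an
iISS Lyapunov function with respect to the input S. -/
theorem seis_EI_subsystem_iISS_lyapunov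
    (β γ ε μ : ℝ) (hβ : 0 < β) (hγ : 0 < γ) (hε : 0 < ε) (hμ : 0 < μ)
    (S E I : ℝ → ℝ)
    (hS_nonneg : ∀ t ≥ (0:ℝ), 0 ≤ S t)
    (hE_nonneg : ∀ t ≥ (0:ℝ), 0 ≤ E t)
    (hI_nonneg : ∀ t ≥ (0:ℝ), 0 ≤ I t)
    (hE : ∀ t ≥ (0:ℝ), HasDerivAt E (β * I t * S t - (ε + μ) * E t) t)
    (hI : ∀ t ≥ (0:ℝ), HasDerivAt I (ε * E t - (γ + μ) * I t) t) :
    ∀ t ≥ (0:ℝ),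
      deriv (fun s => Real.log (1 + E s + I s)) t ≤
        -(μ * (E t + I t) / (1 + E t + I t)) + β * S t := by
  intro t ht
  have hEt := hE_nonneg t ht
  have hIt := hI_nonneg t ht
  have hSt := hS_nonneg t ht
  have hpos : (0:ℝ) < 1 + E t + I t := by linarith
  have hsum : HasDerivAt (fun s => 1 + E s + I s)
      ((β * I t * S t - (ε + μ) * E t) + (ε * E t - (γ + μ) * I t)) t := by
    exact (((hE t ht).const_add 1).add (hI t ht))
  have hlog : HasDerivAt (fun s => Real.log (1 + E s + I s))
      (((β * I t * S t - (ε + μ) * E t) + (ε * E t - (γ + μ) * I t)) / (1 + E t + I t)) t :=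
    hsum.log hpos.ne'
  rw [hlog.deriv]
  rw [div_le_iff₀ hpos]
  have h1 : β * I t * S t ≤ β * S t * (1 + E t + I t) := by
    have : I t ≤ 1 + E t + I t := by linarith
    nlinarith [mul_nonneg hβ.le hSt]
  have h2 : μ * (E t + I t) / (1 + E t + I t) * (1 + E t + I t) = μ * (E t + I t) :=
    div_mul_cancel₀ _ hpos.ne'
  nlinarith [mul_nonneg hγ.le hIt]
end

section
/- Let β, γ, ε, μ > 0, set H := (γ+μ)(ε+μ)/(βε), and fix a ∈ (0,1). Let λ₂ := √(β a² H (ε+μ)/((γ+μ) ε)). Let S, E, I : [0,∞) → [0,∞) be differentiable nonnegative functions with E'(t) = β I(t) S(t) − (ε+μ) E(t) and I'(t) = ε E(t) − (γ+μ) I(t) for all t ≥ 0, and suppose S(t) ≤ a² H for all t ≥ T₀ for some T₀ ≥ 0. Then there exists c > 0 such that d/dt (E(t) + λ₂ I(t)) ≤ −c (E(t) + λ₂ I(t)) for all t ≥ T₀; consequently lim_{t→∞} E(t) = lim_{t→∞} I(t) = 0. -/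
/-- For the EI-subsystem of the SEIS model, if the input S eventually
stays below a²H with a ∈ (0,1) and H = (γ+μ)(ε+μ)/(βε), then the weighted population
E + λ₂I decays exponentially and E, I converge to zero. -/
theorem seis_EI_subsystem_decay
    (β γ ε μ a T₀ : ℝ) (hβ : 0 < β) (hγ : 0 < γ) (hε : 0 < ε) (hμ : 0 < μ)
    (ha0 : 0 < a) (ha1 : a < 1) (hT₀ : 0 ≤ T₀)
    (S E I : ℝ → ℝ)
    (hS_nonneg : ∀ t ≥ (0:ℝ), 0 ≤ S t)
    (hE_nonneg : ∀ t ≥ (0:ℝ), 0 ≤ E t)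
    (hI_nonneg : ∀ t ≥ (0:ℝ), 0 ≤ I t)
    (hE : ∀ t ≥ (0:ℝ), HasDerivAt E (β * I t * S t - (ε + μ) * E t) t)
    (hI : ∀ t ≥ (0:ℝ), HasDerivAt I (ε * E t - (γ + μ) * I t) t)
    (hS_small : ∀ t ≥ T₀, S t ≤ a ^ 2 * ((γ + μ) * (ε + μ) / (β * ε))) :
    (∃ c : ℝ, 0 < c ∧ ∀ t ≥ T₀,
        deriv (fun s => E s +
          Real.sqrt (β * a ^ 2 * ((γ + μ) * (ε + μ) / (β * ε)) * (ε + μ) /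
            ((γ + μ) * ε)) * I s) t ≤
          -c * (E t +
            Real.sqrt (β * a ^ 2 * ((γ + μ) * (ε + μ) / (β * ε)) * (ε + μ) /
              ((γ + μ) * ε)) * I t)) ∧
      Filter.Tendsto E Filter.atTop (nhds 0) ∧
      Filter.Tendsto I Filter.atTop (nhds 0) := by
  have hlval : Real.sqrt (β * a ^ 2 * ((γ + μ) * (ε + μ) / (β * ε)) * (ε + μ) /
      ((γ + μ) * ε)) = a * (ε + μ) / ε := by
    rw [show β * a ^ 2 * ((γ + μ) * (ε + μ) / (β * ε)) * (ε + μ) / ((γ + μ) * ε)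
        = (a * (ε + μ) / ε) ^ 2 by field_simp]
    exact Real.sqrt_sq (by positivity)
  rw [hlval]
  set lam := a * (ε + μ) / ε with hlam
  have hlam_pos : 0 < lam := by positivity
  set c := (1 - a) * min (ε + μ) (γ + μ) with hc
  have hcpos : 0 < c := by
    have h1 : (0:ℝ) < min (ε + μ) (γ + μ) := lt_min (by linarith) (by linarith)
    have h2 : (0:ℝ) < 1 - a := by linarith
    positivity
  set V : ℝ → ℝ := fun s => E s + lam * I s with hV
  set D : ℝ → ℝ := fun t => (β * I t * S t - (ε + μ) * E t) +
      lam * (ε * E t - (γ + μ) * I t) with hD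
  have hVd : ∀ t ≥ (0:ℝ), HasDerivAt V (D t) t :=
    fun t ht => (hE t ht).add ((hI t ht).const_mul lam)
  -- the key differential inequality
  have hkey : ∀ t ≥ T₀, D t ≤ -c * V t := by
    intro t ht
    have ht0 : (0:ℝ) ≤ t := le_trans hT₀ ht
    have hEt := hE_nonneg t ht0
    have hIt := hI_nonneg t ht0
    have hSle := hS_small t ht
    have h1 : β * I t * S t ≤ a * (lam * (γ + μ)) * I t := by
      have := mul_le_mul_of_nonneg_left hSle
        (mul_nonneg hβ.le hIt : 0 ≤ β * I t)
      calc β * I t * S t ≤ β * I t * (a ^ 2 * ((γ + μ) * (ε + μ) / (β * ε))) := this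
        _ = a * (lam * (γ + μ)) * I t := by rw [hlam]; field_simp
    have hA' : lam * ε * E t = a * (ε + μ) * E t := by
      rw [show lam * ε = a * (ε + μ) by rw [hlam]; field_simp]
    have hmin1 : c ≤ (1 - a) * (ε + μ) :=
      mul_le_mul_of_nonneg_left (min_le_left _ _) (by linarith)
    have hmin2 : c ≤ (1 - a) * (γ + μ) :=
      mul_le_mul_of_nonneg_left (min_le_right _ _) (by linarith)
    have hE1 : c * E t ≤ (1 - a) * (ε + μ) * E t :=
      mul_le_mul_of_nonneg_right hmin1 hEt
    have hI2 : c * (lam * I t) ≤ (1 - a) * (γ + μ) * (lam * I t) :=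
      mul_le_mul_of_nonneg_right hmin2 (mul_nonneg hlam_pos.le hIt)
    simp only [hD, hV]
    nlinarith [h1, hA', hE1, hI2]
  -- derivative fact for the exponential test function
  set g : ℝ → ℝ := fun s => V s * Real.exp (c * s) with hg
  have hgd : ∀ t ≥ (0:ℝ), HasDerivAt g
      (D t * Real.exp (c * t) + V t * (Real.exp (c * t) * c)) t := by
    intro t ht
    have hexp : HasDerivAt (fun s => Real.exp (c * s)) (Real.exp (c * t) * c) t := by
      simpa using ((hasDerivAt_id t).const_mul c).exp
    exact (hVd t ht).mul hexp
  have hanti : AntitoneOn g (Set.Ici T₀) := by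
    apply antitoneOn_of_deriv_nonpos (convex_Ici T₀)
    · intro t ht
      exact (hgd t (le_trans hT₀ ht)).continuousAt.continuousWithinAt
    · intro t ht
      rw [interior_Ici] at ht
      exact (hgd t (le_trans hT₀ ht.le)).differentiableAt.differentiableWithinAt
    · intro t ht
      rw [interior_Ici] at ht
      rw [(hgd t (le_trans hT₀ ht.le)).deriv]
      have := hkey t ht.le
      have hpos := Real.exp_pos (c * t)
      nlinarith [this, hpos]
  have hVnonneg : ∀ t ≥ (0:ℝ), 0 ≤ V t := fun t ht =>
    add_nonneg (hE_nonneg t ht) (mul_nonneg hlam_pos.le (hI_nonneg t ht))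
  have hbound : ∀ t ≥ T₀, V t ≤ (V T₀ * Real.exp (c * T₀)) * Real.exp (-(c * t)) := by
    intro t ht
    have h1 : g t ≤ g T₀ := hanti (Set.self_mem_Ici) ht ht
    calc V t = V t * Real.exp (c * t) * Real.exp (-(c * t)) := by
          rw [mul_assoc, ← Real.exp_add]; simp
      _ ≤ V T₀ * Real.exp (c * T₀) * Real.exp (-(c * t)) :=
          mul_le_mul_of_nonneg_right h1 (Real.exp_nonneg _)
  have hlim : Filter.Tendsto (fun t => (V T₀ * Real.exp (c * T₀)) * Real.exp (-(c * t)))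
      Filter.atTop (nhds 0) := by
    have h1 : Filter.Tendsto (fun t : ℝ => c * t) Filter.atTop Filter.atTop :=
      Filter.tendsto_id.const_mul_atTop hcpos
    have h2 : Filter.Tendsto (fun t : ℝ => Real.exp (-(c * t))) Filter.atTop (nhds 0) :=
      Real.tendsto_exp_neg_atTop_nhds_zero.comp h1
    simpa using h2.const_mul (V T₀ * Real.exp (c * T₀))
  have hV0 : Filter.Tendsto V Filter.atTop (nhds 0) := by
    apply tendsto_of_tendsto_of_tendsto_of_le_of_le' tendsto_const_nhds hlim
    · exact Filter.eventually_atTop.2 ⟨T₀, fun t ht => hVnonneg t (le_trans hT₀ ht)⟩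
    · exact Filter.eventually_atTop.2 ⟨T₀, fun t ht => hbound t ht⟩
  have hE0 : Filter.Tendsto E Filter.atTop (nhds 0) := by
    apply tendsto_of_tendsto_of_tendsto_of_le_of_le' tendsto_const_nhds hV0
    · exact Filter.eventually_atTop.2 ⟨0, fun t ht => hE_nonneg t ht⟩
    · exact Filter.eventually_atTop.2 ⟨0, fun t ht => by
        have := mul_nonneg hlam_pos.le (hI_nonneg t ht)
        simp only [hV]; linarith⟩
  have hlamI0 : Filter.Tendsto (fun t => lam * I t) Filter.atTop (nhds 0) := by
    apply tendsto_of_tendsto_of_tendsto_of_le_of_le' tendsto_const_nhds hV0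
    · exact Filter.eventually_atTop.2 ⟨0, fun t ht =>
        mul_nonneg hlam_pos.le (hI_nonneg t ht)⟩
    · exact Filter.eventually_atTop.2 ⟨0, fun t ht => by
        have := hE_nonneg t ht
        simp only [hV]; linarith⟩
  have hI0 : Filter.Tendsto I Filter.atTop (nhds 0) := by
    have := hlamI0.const_mul (1 / lam)
    simp only [mul_zero] at this
    convert this using 1
    ext t
    field_simp
  refine ⟨⟨c, hcpos, fun t ht => ?_⟩, hE0, hI0⟩
  rw [(hVd t (le_trans hT₀ ht)).deriv]
  exact hkey t ht
end

section
/- Let β, γ, ε, μ > 0 and set H := (γ+μ)(ε+μ)/(βε). Let S, E, I : [0,∞) → [0,∞) be differentiable nonnegative functions satisfying the SEIS model S' = B − μS − βIS + γI, E' = βIS − εE − μE, I' = εE − γI − μI for all t ≥ 0, where B : [0,∞) → [0,∞) is measurable with sup_{t≥0} B(t) < μH. Then lim_{t→∞} E(t) = 0 and lim_{t→∞} I(t) = 0; moreover, if B is a constant with B < μH, then lim_{t→∞} (S(t), E(t), I(t)) = (B/μ, 0, 0). -/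
open Filter Real

lemma seis_decay (f f' : ℝ → ℝ) (a k L : ℝ)
    (hf : ∀ t ≥ a, HasDerivAt f (f' t) t)
    (hle : ∀ t ≥ a, f' t ≤ -k * (f t - L)) :
    ∀ t ≥ a, f t ≤ L + (f a - L) * Real.exp (-(k * (t - a))) := by
  intro t ht
  set g : ℝ → ℝ := fun t => (f t - L) * Real.exp (k * (t - a)) with hg
  have hgd : ∀ x ≥ a, HasDerivAt g ((f' x + k * (f x - L)) * Real.exp (k * (x - a))) x := by
    intro x hx
    have h1 : HasDerivAt (fun t => f t - L) (f' x) x := (hf x hx).sub_const L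
    have h2 : HasDerivAt (fun t => Real.exp (k * (t - a))) (k * Real.exp (k * (x - a))) x := by
      have : HasDerivAt (fun t : ℝ => k * (t - a)) k x := by
        simpa using ((hasDerivAt_id x).sub_const a).const_mul k
      simpa [mul_comm] using this.exp
    have := h1.mul h2
    exact this.congr_deriv (by ring)
  have hanti : AntitoneOn g (Set.Ici a) := by
    apply antitoneOn_of_deriv_nonpos (convex_Ici a)
    · exact fun x hx => ((hgd x hx).continuousAt).continuousWithinAt
    · intro x hx
      rw [interior_Ici] at hx
      exact ((hgd x (le_of_lt hx)).differentiableAt).differentiableWithinAt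
    · intro x hx
      rw [interior_Ici] at hx
      rw [(hgd x (le_of_lt hx)).deriv]
      nlinarith [hle x (le_of_lt hx), Real.exp_pos (k * (x - a))]
  have hga : g t ≤ g a := hanti (Set.self_mem_Ici) ht ht
  have hga' : g a = f a - L := by simp [hg]
  rw [hga'] at hga
  have h := mul_le_mul_of_nonneg_right hga (Real.exp_nonneg (-(k * (t - a))))
  rw [hg] at h
  simp only at h
  rw [mul_assoc, ← Real.exp_add, add_neg_cancel, Real.exp_zero, mul_one] at h
  linarith

lemma seis_exp_tendsto (k T C : ℝ) (hk : 0 < k) :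
    Filter.Tendsto (fun t => C * Real.exp (-(k * (t - T)))) Filter.atTop (nhds 0) := by
  have h1 : Tendsto (fun t : ℝ => t - T) atTop atTop := tendsto_atTop_add_const_right _ _ tendsto_id
  have h2 : Tendsto (fun t : ℝ => k * (t - T)) atTop atTop := h1.const_mul_atTop hk
  have h3 : Tendsto (fun t : ℝ => -(k * (t - T))) atTop atBot := tendsto_neg_atTop_atBot.comp h2
  have h4 : Tendsto (fun t : ℝ => Real.exp (-(k * (t - T)))) atTop (nhds 0) :=
    Real.tendsto_exp_atBot.comp h3
  simpa using h4.const_mul C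

lemma seis_key (β γ ε μ d k2 sstar Et It St : ℝ) (hE0 : 0 ≤ Et) (hI0 : 0 ≤ It)
    (hSs : St ≤ sstar) (hβ : 0 < β) (hε : 0 < ε)
    (hk2a : k2 ≤ d)
    (h2c : k2 * (ε + μ - d) + d * (γ + μ) ≤ (γ + μ) * (ε + μ) - β * ε * sstar) :
    ε * (β * It * St - ε * Et - μ * Et) + (ε + μ - d) * (ε * Et - γ * It - μ * It)
      ≤ -k2 * ((ε * Et + (ε + μ - d) * It) - 0) := by
  have hIS : ε * β * (It * St) ≤ ε * β * (It * sstar) :=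
    mul_le_mul_of_nonneg_left (mul_le_mul_of_nonneg_left hSs hI0) (by positivity)
  have h1 : 0 ≤ ε * (Et * (d - k2)) :=
    mul_nonneg hε.le (mul_nonneg hE0 (by linarith))
  have h2 : 0 ≤ It * ((γ + μ) * (ε + μ) - β * ε * sstar - k2 * (ε + μ - d) - d * (γ + μ)) :=
    mul_nonneg hI0 (by linarith)
  nlinarith [hIS, h1, h2]


/-- In the SEIS model, if sup_{t≥0} B(t) < μH with
H = (γ+μ)(ε+μ)/(βε), then E and I converge to zero; moreover, if B is constant, the
solution converges to the disease-free equilibrium (B/μ, 0, 0). -/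
theorem seis_disease_eradication
    (β γ ε μ : ℝ) (hβ : 0 < β) (hγ : 0 < γ) (hε : 0 < ε) (hμ : 0 < μ)
    (B : ℝ → ℝ) (hB_meas : Measurable B) (hB_nonneg : ∀ t ≥ (0:ℝ), 0 ≤ B t)
    (hB_small : ∃ c : ℝ, c < μ * ((γ + μ) * (ε + μ) / (β * ε)) ∧
      ∀ t ≥ (0:ℝ), B t ≤ c)
    (S E I : ℝ → ℝ)
    (hS_nonneg : ∀ t ≥ (0:ℝ), 0 ≤ S t)
    (hE_nonneg : ∀ t ≥ (0:ℝ), 0 ≤ E t)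
    (hI_nonneg : ∀ t ≥ (0:ℝ), 0 ≤ I t)
    (hS : ∀ t ≥ (0:ℝ),
      HasDerivAt S (B t - μ * S t - β * I t * S t + γ * I t) t)
    (hE : ∀ t ≥ (0:ℝ),
      HasDerivAt E (β * I t * S t - ε * E t - μ * E t) t)
    (hI : ∀ t ≥ (0:ℝ), HasDerivAt I (ε * E t - γ * I t - μ * I t) t) :
    (Filter.Tendsto E Filter.atTop (nhds 0) ∧
      Filter.Tendsto I Filter.atTop (nhds 0)) ∧
    ∀ b : ℝ, (∀ t ≥ (0:ℝ), B t = b) →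
      Filter.Tendsto (fun t => (S t, E t, I t)) Filter.atTop
        (nhds (b / μ, 0, 0)) := by
  obtain ⟨c, hc, hBc⟩ := hB_small
  have hβε : 0 < β * ε := mul_pos hβ hε
  have hc0 : 0 ≤ c := (hB_nonneg 0 le_rfl).trans (hBc 0 le_rfl)
  have hcH : c / μ < (γ + μ) * (ε + μ) / (β * ε) := by
    rw [div_lt_div_iff₀ hμ hβε]
    have : μ * ((γ + μ) * (ε + μ) / (β * ε)) * (β * ε) = μ * ((γ + μ) * (ε + μ)) := by
      field_simp
    nlinarith [mul_lt_mul_of_pos_right hc hβε]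
  -- choose sstar strictly between c/μ and the threshold
  obtain ⟨sstar, hs1, hs2, hs0⟩ : ∃ s : ℝ, c / μ < s ∧
      β * ε * s < (γ + μ) * (ε + μ) ∧ 0 ≤ s := by
    refine ⟨(c / μ + (γ + μ) * (ε + μ) / (β * ε)) / 2, by linarith, ?_, ?_⟩
    · have key : c / μ * (β * ε) < (γ + μ) * (ε + μ) := (lt_div_iff₀ hβε).mp hcH
      have hhalf : β * ε * ((c / μ + (γ + μ) * (ε + μ) / (β * ε)) / 2)
          = (β * ε * (c / μ) + (γ + μ) * (ε + μ)) / 2 := by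
        field_simp
      rw [hhalf]
      nlinarith [key]
    · have : 0 ≤ c / μ := div_nonneg hc0 hμ.le
      have : 0 < (γ + μ) * (ε + μ) / (β * ε) := by positivity
      linarith
  set P : ℝ := (γ + μ) * (ε + μ) - β * ε * sstar with hPdef
  have hP : 0 < P := by simp only [hPdef]; linarith
  obtain ⟨d, hd, hd1, hd2⟩ : ∃ d : ℝ, 0 < d ∧ d < ε + μ ∧ d * (γ + μ) ≤ P / 2 := by
    refine ⟨min ((ε + μ) / 2) (P / (2 * (γ + μ))), lt_min (by linarith) (by positivity), ?_, ?_⟩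
    · calc min ((ε + μ) / 2) (P / (2 * (γ + μ))) ≤ (ε + μ) / 2 := min_le_left _ _
        _ < ε + μ := by linarith
    · have h := min_le_right ((ε + μ) / 2) (P / (2 * (γ + μ)))
      have h2 := mul_le_mul_of_nonneg_right h (by linarith : (0:ℝ) ≤ γ + μ)
      calc min ((ε + μ) / 2) (P / (2 * (γ + μ))) * (γ + μ)
          ≤ P / (2 * (γ + μ)) * (γ + μ) := h2
        _ = P / 2 := by field_simp
  have hεμd : (0:ℝ) < ε + μ - d := by linarith
  obtain ⟨k2, hk2, hk2a, hk2b⟩ : ∃ k : ℝ, 0 < k ∧ k ≤ d ∧ k * (ε + μ - d) ≤ P / 2 := by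
    refine ⟨min d (P / (2 * (ε + μ - d))), lt_min hd (by positivity), min_le_left _ _, ?_⟩
    have h := min_le_right d (P / (2 * (ε + μ - d)))
    have h2 := mul_le_mul_of_nonneg_right h hεμd.le
    calc min d (P / (2 * (ε + μ - d))) * (ε + μ - d)
        ≤ P / (2 * (ε + μ - d)) * (ε + μ - d) := h2
      _ = P / 2 := by field_simp
  -- total population N = S + E + I
  have hNderiv : ∀ t ≥ (0:ℝ),
      HasDerivAt (fun t => S t + E t + I t) (B t - μ * (S t + E t + I t)) t := by
    intro t ht
    have := ((hS t ht).add (hE t ht)).add (hI t ht)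
    exact this.congr_deriv (by ring)
  have hNbd : ∀ t ≥ (0:ℝ), S t + E t + I t ≤
      c / μ + ((S 0 + E 0 + I 0) - c / μ) * Real.exp (-(μ * (t - 0))) := by
    apply seis_decay (fun t => S t + E t + I t) (fun t => B t - μ * (S t + E t + I t)) 0 μ (c / μ)
      hNderiv
    intro t ht
    have hBt := hBc t ht
    have hcc : μ * (c / μ) = c := mul_div_cancel₀ c hμ.ne'
    show B t - μ * (S t + E t + I t) ≤ -μ * ((S t + E t + I t) - c / μ)
    linarith
  -- find T with S ≤ sstar on [T, ∞)
  have hδ : 0 < sstar - c / μ := by linarith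
  have htend := seis_exp_tendsto μ 0 ((S 0 + E 0 + I 0) - c / μ) hμ
  have hev : ∀ᶠ t in atTop,
      ((S 0 + E 0 + I 0) - c / μ) * Real.exp (-(μ * (t - 0))) < sstar - c / μ :=
    htend.eventually_lt_const hδ
  obtain ⟨T0, hT0⟩ := (eventually_atTop).mp hev
  have hT0' : (0:ℝ) ≤ max T0 0 := le_max_right _ _
  have hST : ∀ t ≥ max T0 0, S t ≤ sstar := by
    intro t ht
    have ht0 : (0:ℝ) ≤ t := le_trans hT0' ht
    have h1 := hNbd t ht0
    have h2 := hT0 t (le_trans (le_max_left _ _) ht)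
    have h3 : 0 ≤ E t := hE_nonneg t ht0
    have h4 : 0 ≤ I t := hI_nonneg t ht0
    linarith
  -- Lyapunov function V = ε E + (ε+μ-d) I
  have hVderiv : ∀ t ≥ max T0 0,
      HasDerivAt (fun t => ε * E t + (ε + μ - d) * I t)
        (ε * (β * I t * S t - ε * E t - μ * E t) +
          (ε + μ - d) * (ε * E t - γ * I t - μ * I t)) t := by
    intro t ht
    have ht0 : (0:ℝ) ≤ t := le_trans hT0' ht
    exact ((hE t ht0).const_mul ε).add ((hI t ht0).const_mul (ε + μ - d))
  have hVbd : ∀ t ≥ max T0 0, ε * E t + (ε + μ - d) * I t ≤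
      0 + ((ε * E (max T0 0) + (ε + μ - d) * I (max T0 0)) - 0) *
        Real.exp (-(k2 * (t - max T0 0))) := by
    apply seis_decay _ _ _ k2 0 hVderiv
    intro t ht
    have ht0 : (0:ℝ) ≤ t := le_trans hT0' ht
    exact seis_key β γ ε μ d k2 sstar (E t) (I t) (S t) (hE_nonneg t ht0) (hI_nonneg t ht0)
      (hST t ht) hβ hε hk2a (by simp only [hPdef] at hk2b hd2; linarith)
  have hVtend : Tendsto (fun t => ε * E t + (ε + μ - d) * I t) atTop (nhds 0) := by
    apply squeeze_zero' (g := fun t =>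
      0 + ((ε * E (max T0 0) + (ε + μ - d) * I (max T0 0)) - 0) *
        Real.exp (-(k2 * (t - max T0 0))))
    · filter_upwards [eventually_ge_atTop (0:ℝ)] with t ht
      have h3 : 0 ≤ E t := hE_nonneg t ht
      have h4 : 0 ≤ I t := hI_nonneg t ht
      nlinarith
    · filter_upwards [eventually_ge_atTop (max T0 0)] with t ht
      exact hVbd t ht
    · have := seis_exp_tendsto k2 (max T0 0)
        ((ε * E (max T0 0) + (ε + μ - d) * I (max T0 0)) - 0) hk2
      simpa using this
  have hElim : Tendsto E atTop (nhds 0) := by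
    apply squeeze_zero' (g := fun t => ε⁻¹ * (ε * E t + (ε + μ - d) * I t))
    · filter_upwards [eventually_ge_atTop (0:ℝ)] with t ht using hE_nonneg t ht
    · filter_upwards [eventually_ge_atTop (0:ℝ)] with t ht
      have h4 : 0 ≤ I t := hI_nonneg t ht
      have key : ε * E t ≤ ε * E t + (ε + μ - d) * I t := by nlinarith
      calc E t = ε⁻¹ * (ε * E t) := by field_simp
        _ ≤ ε⁻¹ * (ε * E t + (ε + μ - d) * I t) :=
          mul_le_mul_of_nonneg_left key (by positivity)
    · simpa using hVtend.const_mul ε⁻¹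
  have hIlim : Tendsto I atTop (nhds 0) := by
    apply squeeze_zero' (g := fun t => (ε + μ - d)⁻¹ * (ε * E t + (ε + μ - d) * I t))
    · filter_upwards [eventually_ge_atTop (0:ℝ)] with t ht using hI_nonneg t ht
    · filter_upwards [eventually_ge_atTop (0:ℝ)] with t ht
      have h3 : 0 ≤ E t := hE_nonneg t ht
      have key : (ε + μ - d) * I t ≤ ε * E t + (ε + μ - d) * I t := by nlinarith
      calc I t = (ε + μ - d)⁻¹ * ((ε + μ - d) * I t) := by field_simp
        _ ≤ (ε + μ - d)⁻¹ * (ε * E t + (ε + μ - d) * I t) :=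
          mul_le_mul_of_nonneg_left key (by positivity)
    · simpa using hVtend.const_mul (ε + μ - d)⁻¹
  refine ⟨⟨hElim, hIlim⟩, ?_⟩
  intro b hb
  have hNderiv' : ∀ t ≥ (0:ℝ),
      HasDerivAt (fun t => S t + E t + I t) (b - μ * (S t + E t + I t)) t := by
    intro t ht
    have := hNderiv t ht
    rwa [hb t ht] at this
  have hμb : μ * (b / μ) = b := mul_div_cancel₀ b hμ.ne'
  have hupper : ∀ t ≥ (0:ℝ), S t + E t + I t ≤
      b / μ + ((S 0 + E 0 + I 0) - b / μ) * Real.exp (-(μ * (t - 0))) := by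
    apply seis_decay (fun t => S t + E t + I t) (fun t => b - μ * (S t + E t + I t)) 0 μ (b / μ)
      hNderiv'
    intro t ht
    show b - μ * (S t + E t + I t) ≤ -μ * ((S t + E t + I t) - b / μ)
    linarith [hμb]
  have hlower : ∀ t ≥ (0:ℝ), -(S t + E t + I t) ≤
      -(b / μ) + ((-(S 0 + E 0 + I 0)) - (-(b / μ))) * Real.exp (-(μ * (t - 0))) := by
    have := seis_decay (fun t => -(S t + E t + I t)) (fun t => -(b - μ * (S t + E t + I t)))
      0 μ (-(b / μ)) (fun t ht => (hNderiv' t ht).neg) (fun t ht => by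
        show -(b - μ * (S t + E t + I t)) ≤ -μ * (-(S t + E t + I t) - -(b / μ))
        linarith [hμb])
    intro t ht
    exact this t ht
  have hNlim : Tendsto (fun t => S t + E t + I t) atTop (nhds (b / μ)) := by
    rw [tendsto_iff_dist_tendsto_zero]
    apply squeeze_zero' (g := fun t => |(S 0 + E 0 + I 0) - b / μ| * Real.exp (-(μ * (t - 0))))
    · exact Eventually.of_forall fun t => dist_nonneg
    · filter_upwards [eventually_ge_atTop (0:ℝ)] with t ht
      have h1 := hupper t ht
      have h2 := hlower t ht
      rw [Real.dist_eq, abs_le]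
      have hexp : 0 < Real.exp (-(μ * (t - 0))) := Real.exp_pos _
      have hp1 := mul_le_mul_of_nonneg_right
        (neg_abs_le ((S 0 + E 0 + I 0) - b / μ)) hexp.le
      have hp2 := mul_le_mul_of_nonneg_right
        (le_abs_self ((S 0 + E 0 + I 0) - b / μ)) hexp.le
      constructor
      · linarith [hp1]
      · linarith [hp2]
    · exact seis_exp_tendsto μ 0 _ hμ
  have hSlim : Tendsto S atTop (nhds (b / μ)) := by
    have h := (hNlim.sub hElim).sub hIlim
    rw [sub_zero, sub_zero] at h
    exact h.congr (fun t => by ring)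
  exact (hSlim.prodMk_nhds (hElim.prodMk_nhds hIlim))
end

section
/- Let β, γ, ε, μ > 0, set H := (γ+μ)(ε+μ)/(βε), and let B ≥ 0 be a constant with B < μH. Let S, E, I, R : [0,∞) → [0,∞) be differentiable nonnegative functions satisfying the SEIR model S' = B − μS − βIS, E' = βIS − εE − μE, I' = εE − γI − μI, R' = γI − μR for all t ≥ 0. Then lim_{t→∞} (S(t), E(t), I(t), R(t)) = (B/μ, 0, 0, 0). -/
open Filter Real

lemma seir_aux_exp_decay (a T : ℝ) (ha : 0 < a) :
    Tendsto (fun t : ℝ => Real.exp (-(a * (t - T)))) atTop (nhds 0) := by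
  apply Real.tendsto_exp_atBot.comp
  apply Filter.tendsto_neg_atBot_iff.mpr
  exact (tendsto_atTop_add_const_right _ (-T) tendsto_id).const_mul_atTop ha |>.congr
    (fun t => by simp only [id]; ring)

lemma seir_aux_comp (T c a : ℝ) (f d : ℝ → ℝ) (ha : 0 < a)
    (hf : ∀ t ≥ T, HasDerivAt f (d t) t)
    (hd : ∀ t ≥ T, d t ≤ c - a * f t) :
    ∀ t ≥ T, f t ≤ c / a + (f T - c / a) * Real.exp (-(a * (t - T))) := by
  set F : ℝ → ℝ := fun t => (f t - c / a) * Real.exp (a * t) with hF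
  have hFd : ∀ t ≥ T, HasDerivAt F
      (d t * Real.exp (a * t) + (f t - c / a) * (Real.exp (a * t) * a)) t := by
    intro t ht
    have he : HasDerivAt (fun t : ℝ => Real.exp (a * t)) (Real.exp (a * t) * a) t := by
      simpa using ((hasDerivAt_id t).const_mul a).exp
    exact ((hf t ht).sub_const _).mul he
  have hca : c / a * a = c := div_mul_cancel₀ c ha.ne'
  have hanti : AntitoneOn F (Set.Ici T) := by
    apply antitoneOn_of_deriv_nonpos (convex_Ici T)
    · exact fun t ht => (hFd t ht).continuousAt.continuousWithinAt
    · rw [interior_Ici]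
      exact fun t ht => ((hFd t ht.le).differentiableAt).differentiableWithinAt
    · rw [interior_Ici]
      intro t ht
      rw [(hFd t ht.le).deriv]
      have h1 := hd t ht.le
      have h2 := Real.exp_pos (a * t)
      nlinarith [mul_le_mul_of_nonneg_left (show d t + a * f t ≤ c by linarith) h2.le]
  intro t ht
  have key : F t ≤ F T := hanti (Set.self_mem_Ici) ht ht
  have h3 : (f t - c / a) * Real.exp (a * t) ≤ (f T - c / a) * Real.exp (a * T) := key
  have h4 := mul_le_mul_of_nonneg_right h3 (Real.exp_pos (-(a * t))).le
  have e1 : Real.exp (a * t) * Real.exp (-(a * t)) = 1 := by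
    rw [← Real.exp_add]; simp
  have e2 : Real.exp (a * T) * Real.exp (-(a * t)) = Real.exp (-(a * (t - T))) := by
    rw [← Real.exp_add]; ring_nf
  rw [mul_assoc, mul_assoc, e1, e2, mul_one] at h4
  linarith

lemma seir_aux_ev (T a : ℝ) (f d g : ℝ → ℝ) (ha : 0 < a)
    (hf : ∀ t ≥ T, HasDerivAt f (d t) t)
    (hd : ∀ t ≥ T, d t ≤ g t - a * f t)
    (hg : Tendsto g atTop (nhds 0)) :
    ∀ ε > 0, ∀ᶠ t in atTop, f t ≤ ε := by
  intro ε hε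
  obtain ⟨T₁', hT₁'⟩ := eventually_atTop.1 (hg.eventually_le_const (by positivity : (0:ℝ) < a * (ε/2)))
  set T₂ := max T₁' T with hT₂
  have hb := seir_aux_comp T₂ (a * (ε/2)) a f d ha
    (fun t ht => hf t (le_trans (le_max_right _ _) ht))
    (fun t ht => by
      have := hT₁' t (le_trans (le_max_left _ _) ht)
      have := hd t (le_trans (le_max_right _ _) ht)
      linarith)
  have hc : a * (ε/2) / a = ε/2 := by field_simp
  have htend : Tendsto (fun t => a * (ε/2) / a + (f T₂ - a * (ε/2) / a) * Real.exp (-(a * (t - T₂))))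
      atTop (nhds (ε/2)) := by
    have := ((seir_aux_exp_decay a T₂ ha).const_mul (f T₂ - a * (ε/2) / a)).const_add (a * (ε/2) / a)
    simpa [hc] using this
  filter_upwards [htend.eventually_le_const (by linarith : ε/2 < ε), eventually_ge_atTop T₂]
    with t h1 h2
  exact le_trans (hb t h2) h1

lemma seir_aux_tendsto_zero (f : ℝ → ℝ) (h0 : ∀ᶠ t in atTop, 0 ≤ f t)
    (h1 : ∀ ε > 0, ∀ᶠ t in atTop, f t ≤ ε) : Tendsto f atTop (nhds (0:ℝ)) := by
  refine tendsto_order.2 ⟨fun c hc => ?_, fun c hc => ?_⟩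
  · filter_upwards [h0] with t ht; linarith
  · filter_upwards [h1 (c/2) (by linarith)] with t ht; linarith

/-- In the SEIR model with constant newborn/immigration rate B < μH,
H = (γ+μ)(ε+μ)/(βε), the solution converges to the disease-free equilibrium
(B/μ, 0, 0, 0). -/
theorem seir_disease_free_convergence
    (β γ ε μ B : ℝ) (hβ : 0 < β) (hγ : 0 < γ) (hε : 0 < ε) (hμ : 0 < μ)
    (hB : 0 ≤ B) (hB_small : B < μ * ((γ + μ) * (ε + μ) / (β * ε)))
    (S E I R : ℝ → ℝ)
    (hS_nonneg : ∀ t ≥ (0:ℝ), 0 ≤ S t)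
    (hE_nonneg : ∀ t ≥ (0:ℝ), 0 ≤ E t)
    (hI_nonneg : ∀ t ≥ (0:ℝ), 0 ≤ I t)
    (hR_nonneg : ∀ t ≥ (0:ℝ), 0 ≤ R t)
    (hS : ∀ t ≥ (0:ℝ), HasDerivAt S (B - μ * S t - β * I t * S t) t)
    (hE : ∀ t ≥ (0:ℝ), HasDerivAt E (β * I t * S t - ε * E t - μ * E t) t)
    (hI : ∀ t ≥ (0:ℝ), HasDerivAt I (ε * E t - γ * I t - μ * I t) t)
    (hR : ∀ t ≥ (0:ℝ), HasDerivAt R (γ * I t - μ * R t) t) :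
    Filter.Tendsto (fun t => (S t, E t, I t, R t)) Filter.atTop
      (nhds (B / μ, 0, 0, 0)) := by
  have hβε : 0 < β * ε := mul_pos hβ hε
  have hH : 0 < (γ + μ) * (ε + μ) / (β * ε) := by positivity
  have hBμ : B / μ < (γ + μ) * (ε + μ) / (β * ε) := by
    rw [div_lt_iff₀ hμ]
    linarith
  have hBμ0 : 0 ≤ B / μ := div_nonneg hB hμ.le
  set M := (B / μ + (γ + μ) * (ε + μ) / (β * ε)) / 2 with hMdef
  have hM0 : 0 < M := by rw [hMdef]; linarith
  have hM1 : B / μ < M := by rw [hMdef]; linarith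
  have hM2 : M < (γ + μ) * (ε + μ) / (β * ε) := by rw [hMdef]; linarith
  -- global upper bound on S
  have hSb := seir_aux_comp 0 B μ S (fun t => B - μ * S t - β * I t * S t) hμ hS
    (fun t ht => by
      have hprod := mul_nonneg (mul_nonneg hβ.le (hI_nonneg t ht)) (hS_nonneg t ht)
      linarith)
  set C := max (S 0) (B / μ) with hCdef
  have hC : ∀ t ≥ (0:ℝ), S t ≤ C := by
    intro t ht
    have h1 := hSb t ht
    have h2 : Real.exp (-(μ * (t - 0))) ≤ 1 := by
      rw [Real.exp_le_one_iff]; nlinarith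
    have h3 := Real.exp_pos (-(μ * (t - 0)))
    have h4 : S 0 ≤ C := le_max_left _ _
    have h5 : B / μ ≤ C := le_max_right _ _
    rcases le_total (S 0) (B / μ) with h | h
    · have : (S 0 - B / μ) * Real.exp (-(μ * (t - 0))) ≤ 0 :=
        mul_nonpos_of_nonpos_of_nonneg (by linarith) h3.le
      linarith
    · have : (S 0 - B / μ) * Real.exp (-(μ * (t - 0))) ≤ (S 0 - B / μ) * 1 :=
        mul_le_mul_of_nonneg_left h2 (by linarith)
      linarith
  -- eventually S ≤ M
  have htendS : Tendsto (fun t => B / μ + (S 0 - B / μ) * Real.exp (-(μ * (t - 0))))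
      atTop (nhds (B / μ)) := by
    have := ((seir_aux_exp_decay μ 0 hμ).const_mul (S 0 - B / μ)).const_add (B / μ)
    simpa using this
  obtain ⟨T₀', hT₀'⟩ := eventually_atTop.1 (htendS.eventually_le_const hM1)
  set T₀ := max T₀' 0 with hT₀def
  have hT₀0 : (0:ℝ) ≤ T₀ := le_max_right _ _
  have hT₀ : ∀ t ≥ T₀, S t ≤ M := fun t ht =>
    le_trans (hSb t (le_trans hT₀0 ht)) (hT₀' t (le_trans (le_max_left _ _) ht))
  -- choose Lyapunov coefficient
  have hεμ : 0 < ε + μ := by linarith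
  have hβM : 0 < β * M := by positivity
  have hkey : ε * (β * M) < (γ + μ) * (ε + μ) := by
    have := (lt_div_iff₀ hβε).1 hM2
    linarith
  have hlt : ε / (ε + μ) < (γ + μ) / (β * M) := by
    rw [div_lt_div_iff₀ hεμ hβM]; linarith
  set av := (ε / (ε + μ) + (γ + μ) / (β * M)) / 2 with havdef
  have ha1 : ε / (ε + μ) < av := by rw [havdef]; linarith
  have ha2 : av < (γ + μ) / (β * M) := by rw [havdef]; linarith
  have ha0 : 0 < av := lt_trans (by positivity) ha1
  have ha1' : ε < av * (ε + μ) := (div_lt_iff₀ hεμ).1 ha1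
  have ha2' : av * (β * M) < γ + μ := (lt_div_iff₀ hβM).1 ha2
  set lam := min ((av * (ε + μ) - ε) / av) ((γ + μ) - av * (β * M)) with hlamdef
  have hlam0 : 0 < lam := lt_min (div_pos (by linarith) ha0) (by linarith)
  have hlama : lam * av ≤ av * (ε + μ) - ε := by
    have h := mul_le_mul_of_nonneg_right
      (min_le_left ((av * (ε + μ) - ε) / av) ((γ + μ) - av * (β * M))) ha0.le
    rwa [div_mul_cancel₀ _ ha0.ne'] at h
  have hlamI : lam ≤ (γ + μ) - av * (β * M) := min_le_right _ _
  -- Lyapunov function W = av*E + I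
  set W := fun t => av * E t + I t with hWdef
  set dW := fun t => av * (β * I t * S t - ε * E t - μ * E t) + (ε * E t - γ * I t - μ * I t)
    with hdWdef
  have hWd : ∀ t ≥ T₀, HasDerivAt W (dW t) t := fun t ht =>
    ((hE t (le_trans hT₀0 ht)).const_mul av).add (hI t (le_trans hT₀0 ht))
  have hWb : ∀ t ≥ T₀, dW t ≤ 0 - lam * W t := by
    intro t ht
    have ht0 : (0:ℝ) ≤ t := le_trans hT₀0 ht
    have hIn := hI_nonneg t ht0
    have hEn := hE_nonneg t ht0
    have hSM := hT₀ t ht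
    have h1 : β * I t * S t ≤ β * I t * M :=
      mul_le_mul_of_nonneg_left hSM (by positivity)
    have h1' : av * (β * I t * S t) ≤ av * (β * I t * M) :=
      mul_le_mul_of_nonneg_left h1 ha0.le
    have h2 := mul_le_mul_of_nonneg_right hlama hEn
    have h3 : lam * I t ≤ ((γ + μ) - av * (β * M)) * I t :=
      mul_le_mul_of_nonneg_right hlamI hIn
    show av * (β * I t * S t - ε * E t - μ * E t) + (ε * E t - γ * I t - μ * I t)
      ≤ 0 - lam * (av * E t + I t)
    linarith [h1', h2, h3]
  have hWcomp := seir_aux_comp T₀ 0 lam W dW hlam0 hWd hWb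
  have hWtend : Tendsto W atTop (nhds 0) := by
    have hbt : Tendsto (fun t => 0 / lam + (W T₀ - 0 / lam) * Real.exp (-(lam * (t - T₀))))
        atTop (nhds 0) := by
      have := ((seir_aux_exp_decay lam T₀ hlam0).const_mul (W T₀ - 0 / lam)).const_add (0 / lam)
      simpa using this
    apply squeeze_zero' ?_ ?_ hbt
    · filter_upwards [eventually_ge_atTop (0:ℝ)] with t ht
      have h1 := mul_nonneg ha0.le (hE_nonneg t ht)
      have h2 := hI_nonneg t ht
      show 0 ≤ av * E t + I t
      linarith
    · filter_upwards [eventually_ge_atTop T₀] with t ht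
      exact hWcomp t ht
  have hWEb : ∀ t ≥ (0:ℝ), E t ≤ (1 / av) * W t := by
    intro t ht
    have hIn := hI_nonneg t ht
    have h : av * E t ≤ W t := by simp only [hWdef]; linarith
    calc E t = (1 / av) * (av * E t) := by field_simp
    _ ≤ (1 / av) * W t := mul_le_mul_of_nonneg_left h (by positivity)
  have hEtend : Tendsto E atTop (nhds 0) := by
    apply squeeze_zero' ?_ ?_ (by simpa using hWtend.const_mul (1 / av))
    · filter_upwards [eventually_ge_atTop (0:ℝ)] with t ht
      exact hE_nonneg t ht
    · filter_upwards [eventually_ge_atTop (0:ℝ)] with t ht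
      simpa [one_div, hWdef] using hWEb t ht
  have hItend : Tendsto I atTop (nhds 0) := by
    apply squeeze_zero' ?_ ?_ hWtend
    · filter_upwards [eventually_ge_atTop (0:ℝ)] with t ht
      exact hI_nonneg t ht
    · filter_upwards [eventually_ge_atTop (0:ℝ)] with t ht
      have h1 := mul_nonneg ha0.le (hE_nonneg t ht)
      show I t ≤ av * E t + I t
      linarith
  -- R tends to 0
  have hRev := seir_aux_ev 0 μ R (fun t => γ * I t - μ * R t) (fun t => γ * I t) hμ hR
    (fun t ht => le_refl _) (by simpa using hItend.const_mul γ)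
  have hRtend : Tendsto R atTop (nhds 0) := by
    apply seir_aux_tendsto_zero R ?_ hRev
    filter_upwards [eventually_ge_atTop (0:ℝ)] with t ht
    exact hR_nonneg t ht
  -- S tends to B/μ
  have hμB : μ * (B / μ) = B := by field_simp
  have hSup := seir_aux_ev 0 μ (fun t => S t - B / μ)
    (fun t => B - μ * S t - β * I t * S t) (fun _ => 0) hμ
    (fun t ht => (hS t ht).sub_const _)
    (fun t ht => by
      have hprod := mul_nonneg (mul_nonneg hβ.le (hI_nonneg t ht)) (hS_nonneg t ht)
      linarith [hμB])
    tendsto_const_nhds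
  have hlow := seir_aux_ev 0 μ (fun t => B / μ - S t)
    (fun t => -(B - μ * S t - β * I t * S t)) (fun t => β * C * I t) hμ
    (fun t ht => (hS t ht).const_sub _)
    (fun t ht => by
      have hIn := hI_nonneg t ht
      have hSC := hC t ht
      have h := mul_le_mul_of_nonneg_left hSC (mul_nonneg hβ.le hIn)
      linarith [hμB, h])
    (by simpa using hItend.const_mul (β * C))
  have hStend : Tendsto S atTop (nhds (B / μ)) := by
    rw [Metric.tendsto_atTop]
    intro εp hεp
    obtain ⟨N₁, h1⟩ := eventually_atTop.1 (hSup (εp / 2) (by linarith))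
    obtain ⟨N₂, h2⟩ := eventually_atTop.1 (hlow (εp / 2) (by linarith))
    refine ⟨max N₁ N₂, fun t ht => ?_⟩
    have e1 := h1 t (le_trans (le_max_left _ _) ht)
    have e2 := h2 t (le_trans (le_max_right _ _) ht)
    rw [Real.dist_eq, abs_lt]
    constructor <;> linarith
  exact hStend.prodMk_nhds (hEtend.prodMk_nhds (hItend.prodMk_nhds hRtend))
end

section
/- Let β, γ, μ > 0, P ∈ (0,1), set H := (γ+μ)/β, and let B ≥ 0 be a constant with B(1−P) < μH. Let S, I, R, A : [0,∞) → [0,∞) be differentiable nonnegative functions satisfying the SIR model with newborn vaccination: S' = B(1−P) − μS − βIS, I' = βIS − γI − μI, R' = γI − μR, A' = BP − μA for all t ≥ 0. Then lim_{t→∞} (S(t), I(t), R(t), A(t)) = (B(1−P)/μ, 0, 0, BP/μ). -/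
open Filter Real

lemma comp_upper {μ c a : ℝ} (hμ : 0 < μ) {f d : ℝ → ℝ}
    (hf : ∀ t ≥ a, HasDerivAt f (d t) t)
    (hd : ∀ t ≥ a, d t ≤ c - μ * f t) :
    ∀ t ≥ a, f t ≤ c/μ + (f a - c/μ) * Real.exp (-(μ * (t - a))) := by
  set g : ℝ → ℝ := fun t => (f t - c/μ) * Real.exp (μ * (t - a)) with hg
  have hgd : ∀ t ≥ a, HasDerivAt g
      ((d t - (c - μ * f t)) * Real.exp (μ * (t - a))) t := by
    intro t ht
    have he : HasDerivAt (fun t => Real.exp (μ * (t - a)))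
        (Real.exp (μ * (t - a)) * μ) t := by
      have : HasDerivAt (fun t : ℝ => μ * (t - a)) μ t := by
        simpa using ((hasDerivAt_id t).sub_const a).const_mul μ
      exact (Real.hasDerivAt_exp _).comp t this
    have : HasDerivAt g (d t * Real.exp (μ * (t - a)) + (f t - c/μ) * (Real.exp (μ * (t - a)) * μ)) t :=
      (((hf t ht).sub_const (c/μ)).mul he)
    convert this using 1
    have hμ' : μ ≠ 0 := ne_of_gt hμ
    have hcμ : c / μ * μ = c := div_mul_cancel₀ c hμ'
    linear_combination (Real.exp (μ * (t - a))) * hcμ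
  have hanti : AntitoneOn g (Set.Ici a) := by
    apply antitoneOn_of_deriv_nonpos (convex_Ici a)
    · exact fun t ht => ((hgd t ht).continuousAt).continuousWithinAt
    · intro t ht
      rw [interior_Ici] at ht
      exact ((hgd t (le_of_lt ht)).differentiableAt).differentiableWithinAt
    · intro t ht
      rw [interior_Ici] at ht
      rw [(hgd t (le_of_lt ht)).deriv]
      have h1 : d t - (c - μ * f t) ≤ 0 := by linarith [hd t (le_of_lt ht)]
      exact mul_nonpos_of_nonpos_of_nonneg h1 (Real.exp_pos _).le
  intro t ht
  have := hanti (Set.self_mem_Ici) (Set.mem_Ici.mpr ht) ht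
  have hga : g a = f a - c/μ := by simp [hg]
  rw [hga] at this
  -- this : g t ≤ f a - c/μ
  have hepos : (0:ℝ) < Real.exp (-(μ * (t - a))) := Real.exp_pos _
  have h2 : (f t - c/μ) * Real.exp (μ * (t - a)) * Real.exp (-(μ * (t - a)))
      ≤ (f a - c/μ) * Real.exp (-(μ * (t - a))) :=
    mul_le_mul_of_nonneg_right this hepos.le
  rw [mul_assoc, ← Real.exp_add] at h2
  simp at h2
  linarith

lemma comp_lower {μ c a : ℝ} (hμ : 0 < μ) {f d : ℝ → ℝ}
    (hf : ∀ t ≥ a, HasDerivAt f (d t) t)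
    (hd : ∀ t ≥ a, c - μ * f t ≤ d t) :
    ∀ t ≥ a, c/μ + (f a - c/μ) * Real.exp (-(μ * (t - a))) ≤ f t := by
  have := comp_upper (f := fun t => -f t) (d := fun t => -d t) (c := -c) (a := a) hμ
    (fun t ht => (hf t ht).neg) (fun t ht => by have := hd t ht; simp; linarith)
  intro t ht
  have h := this t ht
  simp only [neg_div] at h
  have hμ' : μ ≠ 0 := ne_of_gt hμ
  nlinarith [Real.exp_pos (-(μ * (t - a)))]
lemma exp_decay_tendsto_s18 {μ T : ℝ} (hμ : 0 < μ) :
    Filter.Tendsto (fun t => Real.exp (-(μ * (t - T)))) Filter.atTop (nhds 0) := by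
  apply Real.tendsto_exp_atBot.comp
  rw [Filter.tendsto_neg_atBot_iff]
  exact (Filter.tendsto_atTop_add_const_right _ (-T) Filter.tendsto_id).const_mul_atTop hμ

lemma tendsto_of_control {μ c : ℝ} (hμ : 0 < μ) {f d : ℝ → ℝ}
    (hf : ∀ t ≥ (0:ℝ), HasDerivAt f (d t) t)
    (h : ∀ ε > (0:ℝ), ∀ᶠ t in Filter.atTop,
      c - ε - μ * f t ≤ d t ∧ d t ≤ c + ε - μ * f t) :
    Filter.Tendsto f Filter.atTop (nhds (c/μ)) := by
  rw [Metric.tendsto_nhds]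
  intro ε hε
  have hε₁ : (0:ℝ) < μ * ε / 4 := by positivity
  obtain ⟨T₀, hT₀⟩ := Filter.eventually_atTop.mp (h (μ * ε / 4) hε₁)
  set T := max T₀ 0 with hT
  have hTnn : (0:ℝ) ≤ T := le_max_right _ _
  have hbnd : ∀ t ≥ T, c - μ * ε / 4 - μ * f t ≤ d t ∧ d t ≤ c + μ * ε / 4 - μ * f t :=
    fun t ht => hT₀ t (le_trans (le_max_left _ _) ht)
  have hub := comp_upper (μ := μ) (c := c + μ * ε / 4) (a := T) hμ
    (fun t ht => hf t (le_trans hTnn ht))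
    (fun t ht => by linarith [(hbnd t ht).2])
  have hlb := comp_lower (μ := μ) (c := c - μ * ε / 4) (a := T) hμ
    (fun t ht => hf t (le_trans hTnn ht))
    (fun t ht => by linarith [(hbnd t ht).1])
  set K := |f T - (c + μ * ε / 4)/μ| + |f T - (c - μ * ε / 4)/μ| + 1 with hK
  have hKpos : (0:ℝ) < K := by positivity
  have hδpos : (0:ℝ) < ε / (2 * K) := by positivity
  have hev := (exp_decay_tendsto_s18 (T := T) hμ).eventually (gt_mem_nhds hδpos)
  filter_upwards [hev, Filter.eventually_ge_atTop T] with t h1 h2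
  have hepos : (0:ℝ) < Real.exp (-(μ * (t - T))) := Real.exp_pos _
  have hc1 : (c + μ * ε / 4)/μ = c/μ + ε/4 := by
    rw [div_eq_iff (ne_of_gt hμ)]; field_simp
  have hc2 : (c - μ * ε / 4)/μ = c/μ - ε/4 := by
    rw [div_eq_iff (ne_of_gt hμ)]; field_simp
  have hKδ : K * (ε / (2 * K)) = ε / 2 := by
    rw [mul_div_assoc', mul_comm (2:ℝ) K, ← div_div]
    congr 1
    rw [mul_comm, mul_div_assoc, div_self (ne_of_gt hKpos), mul_one]
  have ht1 : (f T - (c + μ * ε / 4)/μ) * Real.exp (-(μ * (t - T))) ≤ ε/2 := by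
    calc (f T - (c + μ * ε / 4)/μ) * Real.exp (-(μ * (t - T)))
        ≤ K * Real.exp (-(μ * (t - T))) := by
          apply mul_le_mul_of_nonneg_right _ hepos.le
          have := le_abs_self (f T - (c + μ * ε / 4)/μ)
          have := abs_nonneg (f T - (c - μ * ε / 4)/μ)
          linarith
      _ ≤ K * (ε / (2 * K)) := mul_le_mul_of_nonneg_left h1.le hKpos.le
      _ = ε/2 := hKδ
  have ht2 : -(ε/2) ≤ (f T - (c - μ * ε / 4)/μ) * Real.exp (-(μ * (t - T))) := by
    calc -(ε/2) = (-K) * (ε / (2 * K)) := by rw [neg_mul, hKδ]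
      _ ≤ (-K) * Real.exp (-(μ * (t - T))) := by
          apply mul_le_mul_of_nonpos_left h1.le (by linarith)
      _ ≤ (f T - (c - μ * ε / 4)/μ) * Real.exp (-(μ * (t - T))) := by
          apply mul_le_mul_of_nonneg_right _ hepos.le
          have := neg_abs_le (f T - (c - μ * ε / 4)/μ)
          have := abs_nonneg (f T - (c + μ * ε / 4)/μ)
          linarith
  have h3 := hub t h2
  have h4 := hlb t h2
  rw [hc1] at h3 ht1
  rw [hc2] at h4 ht2
  rw [Real.dist_eq, abs_lt]
  constructor <;> nlinarith

/-- In the SIR model with newborn vaccination (fraction P ∈ (0,1),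
lifelong immunity), if B(1-P) < μH with H = (γ+μ)/β, then the solution converges to
(B(1-P)/μ, 0, 0, BP/μ). -/
theorem sir_newborn_vaccination_convergence
    (β γ μ B P : ℝ) (hβ : 0 < β) (hγ : 0 < γ) (hμ : 0 < μ) (hB : 0 ≤ B)
    (hP0 : 0 < P) (hP1 : P < 1)
    (hB_small : B * (1 - P) < μ * ((γ + μ) / β))
    (S I R A : ℝ → ℝ)
    (hS_nonneg : ∀ t ≥ (0:ℝ), 0 ≤ S t)
    (hI_nonneg : ∀ t ≥ (0:ℝ), 0 ≤ I t)
    (hR_nonneg : ∀ t ≥ (0:ℝ), 0 ≤ R t)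
    (hA_nonneg : ∀ t ≥ (0:ℝ), 0 ≤ A t)
    (hS : ∀ t ≥ (0:ℝ),
      HasDerivAt S (B * (1 - P) - μ * S t - β * I t * S t) t)
    (hI : ∀ t ≥ (0:ℝ), HasDerivAt I (β * I t * S t - γ * I t - μ * I t) t)
    (hR : ∀ t ≥ (0:ℝ), HasDerivAt R (γ * I t - μ * R t) t)
    (hA : ∀ t ≥ (0:ℝ), HasDerivAt A (B * P - μ * A t) t) :
    Filter.Tendsto (fun t => (S t, I t, R t, A t)) Filter.atTop
      (nhds (B * (1 - P) / μ, 0, 0, B * P / μ)) := by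
  set c₁ := B * (1 - P) with hc₁def
  have hc₁nn : 0 ≤ c₁ := mul_nonneg hB (by linarith)
  set H := (γ + μ) / β with hHdef
  have hβH : β * H = γ + μ := by rw [hHdef]; field_simp
  have hHlt : c₁ / μ < H := by
    rw [div_lt_iff₀ hμ]; linarith [hB_small]
  -- Step 1 : bound on W = S + I
  have hWub := comp_upper (μ := μ) (c := c₁) (a := 0) hμ
    (f := fun t => S t + I t)
    (d := fun t => (B * (1 - P) - μ * S t - β * I t * S t) +
      (β * I t * S t - γ * I t - μ * I t))
    (fun t ht => (hS t ht).add (hI t ht))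
    (fun t ht => by
      have := hI_nonneg t ht
      nlinarith)
  -- the exponential bound tends to c₁/μ
  have hWlim : Filter.Tendsto
      (fun t => c₁/μ + (S 0 + I 0 - c₁/μ) * Real.exp (-(μ * (t - 0))))
      Filter.atTop (nhds (c₁/μ)) := by
    have h0 := (exp_decay_tendsto_s18 (T := (0:ℝ)) hμ).const_mul (S 0 + I 0 - c₁/μ)
    simpa using tendsto_const_nhds.add h0
  set s := (c₁/μ + H)/2 with hsdef
  have hs1 : c₁/μ < s := by rw [hsdef]; linarith
  have hs2 : s < H := by rw [hsdef]; linarith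
  set M := c₁/μ + 1 with hMdef
  have hMpos : 0 < M := by
    have : 0 ≤ c₁/μ := div_nonneg hc₁nn hμ.le
    rw [hMdef]; linarith
  have hSs : ∀ᶠ t in Filter.atTop, S t ≤ s ∧ S t ≤ M := by
    have hmin : c₁/μ < min s M := lt_min hs1 (by rw [hMdef]; linarith)
    filter_upwards [hWlim.eventually (gt_mem_nhds hmin),
      Filter.eventually_ge_atTop (0:ℝ)] with t h1 h2
    have h3 := hWub t h2
    beta_reduce at h3
    have h4 := hI_nonneg t h2
    simp only [lt_min_iff] at h1
    have hSE : S t ≤ c₁ / μ + (S 0 + I 0 - c₁ / μ) * Real.exp (-(μ * (t - 0))) := by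
      linarith
    exact ⟨(hSE.trans_lt h1.1).le, (hSE.trans_lt h1.2).le⟩
  -- Step 2 : I → 0
  obtain ⟨T₀, hT₀⟩ := Filter.eventually_atTop.mp hSs
  set T₁ := max T₀ 0 with hT₁def
  have hT₁nn : (0:ℝ) ≤ T₁ := le_max_right _ _
  have hη : 0 < β * (H - s) := by
    apply mul_pos hβ; linarith
  have hIub := comp_upper (μ := β * (H - s)) (c := 0) (a := T₁) hη
    (f := I) (d := fun t => β * I t * S t - γ * I t - μ * I t)
    (fun t ht => hI t (le_trans hT₁nn ht))
    (fun t ht => by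
      have h1 := (hT₀ t (le_trans (le_max_left _ _) ht)).1
      have h2 := hI_nonneg t (le_trans hT₁nn ht)
      have h3 : β * I t * (S t - s) ≤ 0 :=
        mul_nonpos_of_nonneg_of_nonpos (mul_nonneg hβ.le h2) (by linarith)
      nlinarith [hβH])
  have hItend : Filter.Tendsto I Filter.atTop (nhds 0) := by
    have hlim : Filter.Tendsto
        (fun t => (0:ℝ)/(β*(H-s)) + (I T₁ - 0/(β*(H-s))) *
          Real.exp (-(β * (H - s) * (t - T₁)))) Filter.atTop (nhds 0) := by
      have h0 := (exp_decay_tendsto_s18 (T := T₁) hη).const_mul (I T₁ - 0/(β*(H-s)))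
      have h1 : Filter.Tendsto
          (fun t => (0:ℝ)/(β*(H-s)) + (I T₁ - 0/(β*(H-s))) *
            Real.exp (-(β * (H - s) * (t - T₁)))) Filter.atTop
          (nhds ((0:ℝ)/(β*(H-s)) + (I T₁ - 0/(β*(H-s))) * 0)) :=
        tendsto_const_nhds.add h0
      simpa using h1
    apply tendsto_of_tendsto_of_tendsto_of_le_of_le' tendsto_const_nhds hlim
    · filter_upwards [Filter.eventually_ge_atTop (0:ℝ)] with t ht
      exact hI_nonneg t ht
    · filter_upwards [Filter.eventually_ge_atTop T₁] with t ht
      exact hIub t ht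
  -- Step 3 : S → c₁/μ
  have hStend : Filter.Tendsto S Filter.atTop (nhds (c₁/μ)) := by
    apply tendsto_of_control hμ hS
    intro ε hε
    have hδpos : 0 < ε / (β * M) := by positivity
    have hδ : β * (ε / (β * M)) * M = ε := by field_simp
    filter_upwards [hItend.eventually (gt_mem_nhds hδpos), hSs,
      Filter.eventually_ge_atTop (0:ℝ)] with t h1 h2 h3
    have hInn := hI_nonneg t h3
    have hSnn := hS_nonneg t h3
    have hkey : β * I t * S t ≤ ε := by
      calc β * I t * S t ≤ β * I t * M :=
            mul_le_mul_of_nonneg_left h2.2 (mul_nonneg hβ.le hInn)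
        _ ≤ β * (ε / (β * M)) * M := by
            apply mul_le_mul_of_nonneg_right _ hMpos.le
            exact mul_le_mul_of_nonneg_left h1.le hβ.le
        _ = ε := hδ
    have hkey2 : 0 ≤ β * I t * S t := by positivity
    constructor <;> [linarith; linarith]
  -- Step 4 : R → 0
  have hRtend : Filter.Tendsto R Filter.atTop (nhds 0) := by
    have := tendsto_of_control (c := 0) hμ hR ?_
    · simpa using this
    · intro ε hε
      have hδpos : 0 < ε / γ := by positivity
      filter_upwards [hItend.eventually (gt_mem_nhds hδpos),
        Filter.eventually_ge_atTop (0:ℝ)] with t h1 h2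
      have hInn := hI_nonneg t h2
      have hkey : γ * I t ≤ ε := by
        have ha : γ * I t ≤ γ * (ε / γ) := mul_le_mul_of_nonneg_left h1.le hγ.le
        have hb : γ * (ε / γ) = ε := by field_simp
        linarith
      have hkey2 : 0 ≤ γ * I t := mul_nonneg hγ.le hInn
      constructor <;> [linarith; linarith]
  -- Step 5 : A → BP/μ
  have hAtend : Filter.Tendsto A Filter.atTop (nhds (B * P / μ)) := by
    apply tendsto_of_control hμ hA
    intro ε hε
    exact Filter.Eventually.of_forall fun t => ⟨by linarith, by linarith⟩
  exact hStend.prodMk_nhds (hItend.prodMk_nhds (hRtend.prodMk_nhds hAtend))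
end

section
/- Let β, γ, μ > 0, ρ ≥ 0, set H := (γ+μ)/β, and let B ≥ 0 be a constant with B < (ρ+μ)H. Let S, I, R, A : [0,∞) → [0,∞) be differentiable nonnegative functions satisfying the SIR model with susceptible vaccination: S' = B − ρS − μS − βIS, I' = βIS − γI − μI, R' = γI − μR, A' = ρS − μA for all t ≥ 0. Then lim_{t→∞} I(t) = 0, lim_{t→∞} R(t) = 0, lim_{t→∞} S(t) = B/(ρ+μ), and lim_{t→∞} A(t) = ρB/(μ(ρ+μ)). -/
open Filter Real

lemma key_upper (k c T : ℝ) (hk : 0 < k) (f f' : ℝ → ℝ)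
    (hd : ∀ t ≥ T, HasDerivAt f (f' t) t)
    (hb : ∀ t ≥ T, f' t ≤ c - k * f t) :
    ∀ t ≥ T, f t ≤ c / k + (f T - c / k) * Real.exp (-(k * (t - T))) := by
  set g : ℝ → ℝ := fun t => (f t - c / k) * Real.exp (k * (t - T)) with hgdef
  have hg : ∀ t ≥ T, HasDerivAt g ((f' t + k * (f t - c / k)) * Real.exp (k * (t - T))) t := by
    intro t ht
    have h1 : HasDerivAt (fun s => f s - c / k) (f' t) t := (hd t ht).sub_const _
    have hlin : HasDerivAt (fun s : ℝ => k * (s - T)) k t := by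
      simpa using ((hasDerivAt_id t).sub_const T).const_mul k
    have h2 : HasDerivAt (fun s : ℝ => Real.exp (k * (s - T)))
        (Real.exp (k * (t - T)) * k) t := hlin.exp
    have : HasDerivAt (fun s => (f s - c / k) * Real.exp (k * (s - T))) _ t := h1.mul h2
    convert this using 1
    ring
  have hanti : AntitoneOn g (Set.Ici T) := by
    apply antitoneOn_of_deriv_nonpos (convex_Ici T)
    · exact fun t ht => (hg t ht).continuousAt.continuousWithinAt
    · intro t ht
      rw [interior_Ici] at ht
      exact ((hg t (le_of_lt ht)).differentiableAt).differentiableWithinAt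
    · intro t ht
      rw [interior_Ici] at ht
      rw [(hg t (le_of_lt ht)).deriv]
      apply mul_nonpos_of_nonpos_of_nonneg _ (Real.exp_nonneg _)
      have hb' := hb t (le_of_lt ht)
      have : k * (c / k) = c := by field_simp
      nlinarith
  intro t ht
  have hgt : g t ≤ g T := hanti (Set.self_mem_Ici) ht ht
  have hgT : g T = f T - c / k := by simp [hgdef]
  rw [hgT] at hgt
  have hexp : Real.exp (-(k * (t - T))) = (Real.exp (k * (t - T)))⁻¹ := Real.exp_neg _
  rw [hexp, ← div_eq_mul_inv]
  have hpos : 0 < Real.exp (k * (t - T)) := Real.exp_pos _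
  have : f t - c / k ≤ (f T - c / k) / Real.exp (k * (t - T)) := (le_div_iff₀ hpos).mpr hgt
  linarith

lemma key_upper_eventually (k c T : ℝ) (hk : 0 < k) (f f' : ℝ → ℝ)
    (hd : ∀ t ≥ T, HasDerivAt f (f' t) t)
    (hb : ∀ t ≥ T, f' t ≤ c - k * f t) (ε : ℝ) (hε : 0 < ε) :
    ∀ᶠ t in atTop, f t ≤ c / k + ε := by
  have h1 := key_upper k c T hk f f' hd hb
  have harg : Tendsto (fun t : ℝ => -(k * (t - T))) atTop atBot := by
    have : Tendsto (fun t : ℝ => k * (t - T)) atTop atTop :=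
      (tendsto_atTop_add_const_right atTop (-T) tendsto_id).const_mul_atTop hk
    simpa using tendsto_neg_atBot_iff.mpr this
  have h2 : Tendsto (fun t => (f T - c / k) * Real.exp (-(k * (t - T)))) atTop (nhds 0) := by
    have := (Real.tendsto_exp_atBot.comp harg).const_mul (f T - c / k)
    simpa using this
  have h3 : ∀ᶠ t in atTop, (f T - c / k) * Real.exp (-(k * (t - T))) < ε :=
    h2.eventually (gt_mem_nhds hε)
  filter_upwards [h3, eventually_ge_atTop T] with t h3 hT
  have := h1 t hT
  linarith

lemma key_lower_eventually (k c T : ℝ) (hk : 0 < k) (f f' : ℝ → ℝ)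
    (hd : ∀ t ≥ T, HasDerivAt f (f' t) t)
    (hb : ∀ t ≥ T, c - k * f t ≤ f' t) (ε : ℝ) (hε : 0 < ε) :
    ∀ᶠ t in atTop, c / k - ε ≤ f t := by
  have := key_upper_eventually k (-c) T hk (fun t => -f t) (fun t => -f' t)
    (fun t ht => (hd t ht).neg)
    (fun t ht => by have := hb t ht; linarith) ε hε
  filter_upwards [this] with t ht
  simp only [neg_div] at ht
  linarith

lemma tendsto_of_eventually_bounds (f : ℝ → ℝ) (l : ℝ)
    (h : ∀ ε > (0:ℝ), ∀ᶠ t in atTop, |f t - l| ≤ ε) :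
    Tendsto f atTop (nhds l) := by
  rw [Metric.tendsto_atTop]
  intro ε hε
  obtain ⟨N, hN⟩ := eventually_atTop.mp (h (ε / 2) (by linarith))
  exact ⟨N, fun n hn => by
    have := hN n hn
    rw [Real.dist_eq]
    linarith⟩

lemma ode_tendsto (k L : ℝ) (hk : 0 < k) (f f' : ℝ → ℝ)
    (hd : ∀ t ≥ (0:ℝ), HasDerivAt f (f' t) t)
    (herr : ∀ ε > (0:ℝ), ∀ᶠ t in atTop, |f' t - (L - k * f t)| ≤ ε) :
    Tendsto f atTop (nhds (L / k)) := by
  apply tendsto_of_eventually_bounds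
  intro ε hε
  have hε' : 0 < k * ε / 2 := by positivity
  obtain ⟨a, ha⟩ := eventually_atTop.mp (herr _ hε')
  set T := max a 0 with hT
  have hd' : ∀ t ≥ T, HasDerivAt f (f' t) t :=
    fun t ht => hd t (le_trans (le_max_right a 0) ht)
  have hub : ∀ t ≥ T, f' t ≤ (L + k * ε / 2) - k * f t := by
    intro t ht
    have := abs_le.mp (ha t (le_trans (le_max_left a 0) ht))
    linarith [this.2]
  have hlb : ∀ t ≥ T, (L - k * ε / 2) - k * f t ≤ f' t := by
    intro t ht
    have := abs_le.mp (ha t (le_trans (le_max_left a 0) ht))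
    linarith [this.1]
  have h1 := key_upper_eventually k (L + k * ε / 2) T hk f f' hd' hub (ε / 2) (by linarith)
  have h2 := key_lower_eventually k (L - k * ε / 2) T hk f f' hd' hlb (ε / 2) (by linarith)
  have e1 : (L + k * ε / 2) / k = L / k + ε / 2 := by field_simp
  have e2 : (L - k * ε / 2) / k = L / k - ε / 2 := by
    rw [sub_div, mul_div_assoc, mul_div_cancel_left₀ _ hk.ne']
  filter_upwards [h1, h2] with t h1 h2
  rw [e1] at h1; rw [e2] at h2
  rw [abs_le]; constructor <;> linarith

/-- In the SIR model with vaccination of susceptibles at rate ρ ≥ 0, if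
B < (ρ+μ)H with H = (γ+μ)/β, then the disease is eradicated and S, A converge to their
steady-state values. -/
theorem sir_susceptible_vaccination_convergence
    (β γ μ ρ B : ℝ) (hβ : 0 < β) (hγ : 0 < γ) (hμ : 0 < μ) (hρ : 0 ≤ ρ)
    (hB : 0 ≤ B) (hB_small : B < (ρ + μ) * ((γ + μ) / β))
    (S I R A : ℝ → ℝ)
    (hS_nonneg : ∀ t ≥ (0:ℝ), 0 ≤ S t)
    (hI_nonneg : ∀ t ≥ (0:ℝ), 0 ≤ I t)
    (hR_nonneg : ∀ t ≥ (0:ℝ), 0 ≤ R t)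
    (hA_nonneg : ∀ t ≥ (0:ℝ), 0 ≤ A t)
    (hS : ∀ t ≥ (0:ℝ),
      HasDerivAt S (B - ρ * S t - μ * S t - β * I t * S t) t)
    (hI : ∀ t ≥ (0:ℝ), HasDerivAt I (β * I t * S t - γ * I t - μ * I t) t)
    (hR : ∀ t ≥ (0:ℝ), HasDerivAt R (γ * I t - μ * R t) t)
    (hA : ∀ t ≥ (0:ℝ), HasDerivAt A (ρ * S t - μ * A t) t) :
    Filter.Tendsto I Filter.atTop (nhds 0) ∧
    Filter.Tendsto R Filter.atTop (nhds 0) ∧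
    Filter.Tendsto S Filter.atTop (nhds (B / (ρ + μ))) ∧
    Filter.Tendsto A Filter.atTop (nhds (ρ * B / (μ * (ρ + μ)))) := by
  have hk : 0 < ρ + μ := by linarith
  set k : ℝ := ρ + μ with hkdef
  set c : ℝ := B / k with hcdef
  have hc0 : 0 ≤ c := div_nonneg hB hk.le
  -- c < (γ+μ)/β
  have hcH : β * c < γ + μ := by
    have h1 : c < (γ + μ) / β := by
      rw [hcdef, div_lt_iff₀ hk]
      linarith [hB_small]
    have := (lt_div_iff₀ hβ).mp h1
    linarith
  -- S satisfies upper ODE inequality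
  have hSub : ∀ t ≥ (0:ℝ), (B - ρ * S t - μ * S t - β * I t * S t) ≤ B - k * S t := by
    intro t ht
    have h1 := hI_nonneg t ht
    have h2 := hS_nonneg t ht
    have : 0 ≤ β * I t * S t := by positivity
    rw [hkdef]; linarith
  have hSd : ∀ t ≥ (0:ℝ),
      HasDerivAt S ((fun t => B - ρ * S t - μ * S t - β * I t * S t) t) t := hS
  -- pointwise bound on S
  have hSbd := key_upper k B 0 hk S _ hSd hSub
  set M : ℝ := c + |S 0 - c| with hMdef
  have hM0 : 0 ≤ M := by positivity
  have hSM : ∀ t ≥ (0:ℝ), S t ≤ M := by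
    intro t ht
    have h1 := hSbd t ht
    have h2 : Real.exp (-(k * (t - 0))) ≤ 1 := by
      rw [Real.exp_le_one_iff]
      simp only [sub_zero]
      nlinarith
    have h3 : (S 0 - B / k) * Real.exp (-(k * (t - 0))) ≤ |S 0 - B / k| * 1 := by
      calc (S 0 - B / k) * Real.exp (-(k * (t - 0)))
          ≤ |S 0 - B / k| * Real.exp (-(k * (t - 0))) :=
            mul_le_mul_of_nonneg_right (le_abs_self _) (Real.exp_nonneg _)
        _ ≤ |S 0 - B / k| * 1 := mul_le_mul_of_nonneg_left h2 (abs_nonneg _)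
    rw [hMdef, hcdef]
    calc S t ≤ B / k + (S 0 - B / k) * Real.exp (-(k * (t - 0))) := h1
      _ ≤ B / k + |S 0 - B / k| * 1 := by linarith
      _ = B / k + |S 0 - B / k| := by ring
  -- δ and T₁
  set δ : ℝ := (γ + μ - β * c) / 2 with hδdef
  have hδ : 0 < δ := by rw [hδdef]; linarith
  have hSev := key_upper_eventually k B 0 hk S _ hSd hSub (δ / β) (by positivity)
  obtain ⟨a, ha⟩ := Filter.eventually_atTop.mp hSev
  set T₁ : ℝ := max a 0 with hT₁
  have hT₁0 : (0:ℝ) ≤ T₁ := le_max_right a 0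
  have hSsmall : ∀ t ≥ T₁, β * S t - γ - μ ≤ -δ := by
    intro t ht
    have h1 := ha t (le_trans (le_max_left a 0) ht)
    have h2 : β * S t ≤ β * (B / k + δ / β) :=
      mul_le_mul_of_nonneg_left h1 hβ.le
    have h3 : β * (δ / β) = δ := by field_simp
    rw [← hcdef] at h2
    nlinarith
  -- I decays
  have hId : ∀ t ≥ T₁,
      HasDerivAt I ((fun t => β * I t * S t - γ * I t - μ * I t) t) t :=
    fun t ht => hI t (le_trans hT₁0 ht)
  have hIub : ∀ t ≥ T₁, (fun t => β * I t * S t - γ * I t - μ * I t) t ≤ 0 - δ * I t := by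
    intro t ht
    have h1 := hSsmall t ht
    have h2 := hI_nonneg t (le_trans hT₁0 ht)
    have h3 : (β * S t - γ - μ) * I t ≤ (-δ) * I t := mul_le_mul_of_nonneg_right h1 h2
    simp only
    nlinarith
  have hIev : ∀ ε > (0:ℝ), ∀ᶠ t in Filter.atTop, I t ≤ ε := by
    intro ε hε
    have := key_upper_eventually δ 0 T₁ hδ I _ hId hIub ε hε
    simpa using this
  have hItend : Filter.Tendsto I Filter.atTop (nhds 0) := by
    apply tendsto_of_eventually_bounds
    intro ε hε
    filter_upwards [hIev ε hε, Filter.eventually_ge_atTop (0:ℝ)] with t h1 h2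
    rw [sub_zero, abs_of_nonneg (hI_nonneg t h2)]
    exact h1
  -- S tends to c
  have hStend' : Filter.Tendsto S Filter.atTop (nhds (B / k)) := by
    apply ode_tendsto k B hk S _ hSd
    intro ε hε
    have hpos : 0 < β * M + 1 := by positivity
    filter_upwards [hIev (ε / (β * M + 1)) (by positivity),
      Filter.eventually_ge_atTop (0:ℝ)] with t h1 h2
    have hS0 := hS_nonneg t h2
    have hI0 := hI_nonneg t h2
    have hSMt := hSM t h2
    have key : β * I t * S t ≤ ε := by
      have e1 : β * I t * S t ≤ β * I t * M :=
        mul_le_mul_of_nonneg_left hSMt (by positivity)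
      have e2 : β * I t * M ≤ β * M * (ε / (β * M + 1)) := by
        have h := mul_le_mul_of_nonneg_left h1 (mul_nonneg hβ.le hM0)
        calc β * I t * M = β * M * I t := by ring
          _ ≤ β * M * (ε / (β * M + 1)) := h
      have e3 : β * M * (ε / (β * M + 1)) ≤ ε := by
        rw [mul_div_assoc']
        rw [div_le_iff₀ hpos]
        nlinarith
      exact le_trans e1 (le_trans e2 e3)
    have : B - ρ * S t - μ * S t - β * I t * S t - (B - k * S t) = -(β * I t * S t) := by
      rw [hkdef]; ring
    show |B - ρ * S t - μ * S t - β * I t * S t - (B - k * S t)| ≤ ε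
    rw [this, abs_neg, abs_of_nonneg (by positivity)]
    exact key
  have hStend : Filter.Tendsto S Filter.atTop (nhds (B / (ρ + μ))) := hStend'
  -- R tends to 0
  have hRtend : Filter.Tendsto R Filter.atTop (nhds 0) := by
    have h := ode_tendsto μ 0 hμ R (fun t => γ * I t - μ * R t) hR ?_
    · simpa using h
    · intro ε hε
      filter_upwards [hIev (ε / γ) (by positivity),
        Filter.eventually_ge_atTop (0:ℝ)] with t h1 h2
      have hI0 := hI_nonneg t h2
      have : γ * I t - μ * R t - (0 - μ * R t) = γ * I t := by ring
      rw [this, abs_of_nonneg (by positivity)]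
      calc γ * I t ≤ γ * (ε / γ) := mul_le_mul_of_nonneg_left h1 hγ.le
        _ = ε := by field_simp
  -- A tends
  have hAtend' : Filter.Tendsto A Filter.atTop (nhds (ρ * c / μ)) := by
    apply ode_tendsto μ (ρ * c) hμ A (fun t => ρ * S t - μ * A t) hA
    intro ε hε
    have hρ1 : 0 < ρ + 1 := by linarith
    have hSev' : ∀ᶠ t in Filter.atTop, |S t - c| < ε / (ρ + 1) := by
      have := Metric.tendsto_atTop.mp hStend' (ε / (ρ + 1)) (by positivity)
      obtain ⟨N, hN⟩ := this
      filter_upwards [Filter.eventually_ge_atTop N] with t ht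
      have := hN t ht
      rwa [Real.dist_eq, ← hcdef] at this
    filter_upwards [hSev'] with t h1
    have : ρ * S t - μ * A t - (ρ * c - μ * A t) = ρ * (S t - c) := by ring
    rw [this, abs_mul, abs_of_nonneg hρ]
    have h2 : ρ * |S t - c| ≤ ρ * (ε / (ρ + 1)) :=
      mul_le_mul_of_nonneg_left h1.le hρ
    have h3 : ρ * (ε / (ρ + 1)) ≤ ε := by
      rw [mul_div_assoc', div_le_iff₀ hρ1]
      nlinarith
    linarith
  have hAtend : Filter.Tendsto A Filter.atTop (nhds (ρ * B / (μ * (ρ + μ)))) := by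
    have heq : ρ * c / μ = ρ * B / (μ * (ρ + μ)) := by
      rw [hcdef, hkdef]
      rw [← mul_div_assoc', div_div, mul_comm (ρ + μ) μ, mul_div_assoc']
    rwa [heq] at hAtend'
  exact ⟨hItend, hRtend, hStend, hAtend⟩
end
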